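/- arXiv:1810.02554 — 8 statements merged into one kernel-verified Lean document; each statement's English description precedes it below -/
import Mathlib

section
/- For all integers h, m, n, u, v, w, the relation [z_3^h z_2^m z_1^n, z_3^u z_2^v z_1^w] = (q^{mu + nv − nu} − q^{hv − hw + mw}) z_3^{h+u} z_2^{m+v} z_1^{n+w} holds in A_q. -/
section Aux
variable {F : Type*} [Field F] {A : Type*} [Ring A] [Algebra F A]

private lemma swap_ctx {x y : A} {c : F} (hxy : x * y = c • (y * x)) (t : A) :
    x * (y * t) = c • (y * (x * t)) := by
  rw [← mul_assoc, hxy, smul_mul_assoc, mul_assoc]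

private lemma flip_comm {x y : A} {c : F} (hc : c ≠ 0) (hxy : x * y = c • (y * x)) :
    y * x = c⁻¹ • (x * y) := by
  rw [hxy, smul_smul, inv_mul_cancel₀ hc, one_smul]

private lemma one_zpow_comm (q : F) (hq : q ≠ 0) (a b : Aˣ)
    (H : (↑a * ↑b : A) = q • (↑b * ↑a)) (j : ℤ) :
    (↑a * ↑(b ^ j) : A) = q ^ j • (↑(b ^ j) * ↑a) := by
  have h1 : (↑b⁻¹ * ↑a : A) = q • (↑a * ↑b⁻¹) := by
    have := congrArg (fun x => (↑b⁻¹ : A) * x * ↑b⁻¹) H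
    simpa [mul_assoc, mul_smul_comm, smul_mul_assoc, ← mul_assoc] using this
  have Hinv : (↑a * ↑b⁻¹ : A) = q⁻¹ • (↑b⁻¹ * ↑a) := flip_comm hq h1
  induction j using Int.induction_on with
  | zero => simp
  | succ i ih =>
      rw [show b ^ ((i : ℤ) + 1) = b ^ (i : ℤ) * b from zpow_add_one b i, Units.val_mul,
        ← mul_assoc, ih, smul_mul_assoc, mul_assoc, H, mul_smul_comm, smul_smul,
        ← zpow_add_one₀ hq, ← mul_assoc]
  | pred i ih =>
      rw [show b ^ (-(i : ℤ) - 1) = b ^ (-(i : ℤ)) * b⁻¹ from zpow_sub_one b _, Units.val_mul,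
        ← mul_assoc, ih, smul_mul_assoc, mul_assoc, Hinv, mul_smul_comm, smul_smul,
        ← zpow_sub_one₀ hq, ← mul_assoc]

private lemma zpow_zpow_comm (q : F) (hq : q ≠ 0) (a b : Aˣ)
    (H : (↑a * ↑b : A) = q • (↑b * ↑a)) (i j : ℤ) :
    (↑(a ^ i) * ↑(b ^ j) : A) = q ^ (i * j) • (↑(b ^ j) * ↑(a ^ i)) := by
  have Hj := one_zpow_comm q hq a b H j
  have Hj' : (↑(b ^ j) * ↑a : A) = q ^ (-j) • (↑a * ↑(b ^ j)) := by
    rw [flip_comm (zpow_ne_zero j hq) Hj, ← zpow_neg]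
  have := one_zpow_comm (q ^ (-j)) (zpow_ne_zero _ hq) (b ^ j) a Hj' i
  have h2 : (↑(a ^ i) * ↑(b ^ j) : A) = (q ^ (-j)) ^ (i : ℤ) • ((q ^ (-j)) ^ i)⁻¹ •
      (↑(a ^ i) * ↑(b ^ j)) := by
    rw [smul_smul, mul_inv_cancel₀ (zpow_ne_zero _ (zpow_ne_zero _ hq)), one_smul]
  calc (↑(a ^ i) * ↑(b ^ j) : A)
      = ((q ^ (-j)) ^ i)⁻¹ • (↑(b ^ j) * ↑(a ^ i)) := by
        rw [this, smul_smul, inv_mul_cancel₀ (zpow_ne_zero _ (zpow_ne_zero _ hq)), one_smul]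
    _ = q ^ (i * j) • (↑(b ^ j) * ↑(a ^ i)) := by
        rw [← zpow_mul, ← zpow_neg, neg_mul, neg_neg, mul_comm j i]

private lemma prod_formula (q : F) (hq : q ≠ 0) (z1 z2 z3 : Aˣ)
    (h12 : (↑z1 * ↑z2 : A) = q • (↑z2 * ↑z1 : A))
    (h23 : (↑z2 * ↑z3 : A) = q • (↑z3 * ↑z2 : A))
    (h31 : (↑z3 * ↑z1 : A) = q • (↑z1 * ↑z3 : A))
    (h m n u v w : ℤ) :
    (↑(z3 ^ h * z2 ^ m * z1 ^ n) : A) * (↑(z3 ^ u * z2 ^ v * z1 ^ w) : A) =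
      q ^ (m * u + n * v - n * u) •
        (↑(z3 ^ (h + u) * z2 ^ (m + v) * z1 ^ (n + w)) : A) := by
  have e1 : (↑(z1 ^ n) * ↑(z3 ^ u) : A) = (q ^ (u * n))⁻¹ • (↑(z3 ^ u) * ↑(z1 ^ n)) :=
    flip_comm (zpow_ne_zero _ hq) (zpow_zpow_comm q hq z3 z1 h31 u n)
  have e2 : (↑(z2 ^ m) * ↑(z3 ^ u) : A) = q ^ (m * u) • (↑(z3 ^ u) * ↑(z2 ^ m)) :=
    zpow_zpow_comm q hq z2 z3 h23 m u
  have e3 : (↑(z1 ^ n) * ↑(z2 ^ v) : A) = q ^ (n * v) • (↑(z2 ^ v) * ↑(z1 ^ n)) :=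
    zpow_zpow_comm q hq z1 z2 h12 n v
  have p1 : (↑(z1 ^ n) * ↑(z1 ^ w) : A) = ↑(z1 ^ (n + w)) := by
    rw [← Units.val_mul, ← zpow_add]
  have p2 : (↑(z2 ^ m) * ↑(z2 ^ v) : A) = ↑(z2 ^ (m + v)) := by
    rw [← Units.val_mul, ← zpow_add]
  have p3 : (↑(z3 ^ h) * ↑(z3 ^ u) : A) = ↑(z3 ^ (h + u)) := by
    rw [← Units.val_mul, ← zpow_add]
  simp only [Units.val_mul, mul_assoc]
  rw [swap_ctx e1, swap_ctx e3]
  simp only [mul_smul_comm, smul_smul]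
  rw [swap_ctx e2]
  simp only [mul_smul_comm, smul_smul]
  rw [p1]
  rw [show (↑(z2 ^ m) * (↑(z2 ^ v) * ↑(z1 ^ (n + w))) : A)
      = ↑(z2 ^ (m + v)) * ↑(z1 ^ (n + w)) from by rw [← mul_assoc, p2]]
  rw [show (↑(z3 ^ h) * (↑(z3 ^ u) * (↑(z2 ^ (m + v)) * ↑(z1 ^ (n + w)))) : A)
      = ↑(z3 ^ (h + u)) * (↑(z2 ^ (m + v)) * ↑(z1 ^ (n + w))) from by
        rw [← mul_assoc, ← mul_assoc, p3, mul_assoc]]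
  congr 1
  rw [← zpow_neg, ← zpow_add₀ hq, ← zpow_add₀ hq]
  ring_nf

end Aux

/-- For all integers `h, m, n, u, v, w`, the relation
`[z₃^h z₂^m z₁^n, z₃^u z₂^v z₁^w] = (q^{mu+nv-nu} - q^{hv-hw+mw}) z₃^{h+u} z₂^{m+v} z₁^{n+w}`
holds in `A_q`, where `[U,V] = UV - VU`. -/
theorem monomial_commutator_formula
    {F : Type*} [Field F] {A : Type*} [Ring A] [Algebra F A]
    (q : F) (hq : q ≠ 0)
    (z1 z2 z3 : Aˣ)
    (h12 : (↑z1 * ↑z2 : A) = q • (↑z2 * ↑z1 : A))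
    (h23 : (↑z2 * ↑z3 : A) = q • (↑z3 * ↑z2 : A))
    (h31 : (↑z3 * ↑z1 : A) = q • (↑z1 * ↑z3 : A))
    (b : Module.Basis (ℤ × ℤ × ℤ) F A)
    (hb : ∀ t : ℤ × ℤ × ℤ, b t = (↑(z3 ^ t.1 * z2 ^ t.2.1 * z1 ^ t.2.2) : A))
    (h m n u v w : ℤ) :
    (↑(z3 ^ h * z2 ^ m * z1 ^ n) : A) * (↑(z3 ^ u * z2 ^ v * z1 ^ w) : A) -
        (↑(z3 ^ u * z2 ^ v * z1 ^ w) : A) * (↑(z3 ^ h * z2 ^ m * z1 ^ n) : A) =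
      (q ^ (m * u + n * v - n * u) - q ^ (h * v - h * w + m * w)) •
        (↑(z3 ^ (h + u) * z2 ^ (m + v) * z1 ^ (n + w)) : A) := by
  rw [prod_formula q hq z1 z2 z3 h12 h23 h31 h m n u v w,
    prod_formula q hq z1 z2 z3 h12 h23 h31 u v w h m n,
    add_comm u h, add_comm v m, add_comm w n, ← sub_smul]
  congr 2
  ring
end

section
/- For all integers h, m, n, u, v, w, the relation [z_3^h z_2^m z_1^n, z_3^u z_2^v z_1^w] = (1 − q^H) · z_3^h z_2^m z_1^n · z_3^u z_2^v z_1^w holds in A_q, where H = h(v − w) + m(w − u) + n(u − v). -/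
section QcommLemmas

variable {G : Type*} [Group G]

lemma zpow_qcomm_one (Q x y : G) (hQ : ∀ g, Commute Q g)
    (h : x * y = Q * (y * x)) (a : ℤ) : x ^ a * y = Q ^ a * (y * x ^ a) := by
  induction a using Int.induction_on with
  | zero => simp
  | succ n ih =>
      calc x ^ ((n:ℤ)+1) * y
          = x ^ (n:ℤ) * (x * y) := by rw [zpow_add_one, mul_assoc]
        _ = x ^ (n:ℤ) * (Q * (y * x)) := by rw [h]
        _ = Q * (x ^ (n:ℤ) * y * x) := by
            rw [← mul_assoc, ← ((hQ (x ^ (n:ℤ))).eq), mul_assoc, mul_assoc]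
        _ = Q * (Q ^ (n:ℤ) * (y * x ^ (n:ℤ)) * x) := by rw [ih]
        _ = Q ^ ((n:ℤ)+1) * (y * x ^ ((n:ℤ)+1)) := by
            rw [zpow_add_one, zpow_add_one, ← ((Commute.refl Q).zpow_right (n:ℤ)).eq]
            group
  | pred n ih =>
      have h2 : y * x = Q⁻¹ * (x * y) := by rw [h]; group
      have h' : x⁻¹ * y = Q⁻¹ * (y * x⁻¹) := by
        calc x⁻¹ * y = x⁻¹ * (y * x) * x⁻¹ := by group
          _ = x⁻¹ * (Q⁻¹ * (x * y)) * x⁻¹ := by rw [h2]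
          _ = Q⁻¹ * (y * x⁻¹) := by
              rw [← mul_assoc, ← mul_assoc, ← (hQ x⁻¹).inv_left.eq]
              group
      calc x ^ (-(n:ℤ)-1) * y
          = x ^ (-(n:ℤ)) * (x⁻¹ * y) := by rw [zpow_sub_one, mul_assoc]
        _ = x ^ (-(n:ℤ)) * (Q⁻¹ * (y * x⁻¹)) := by rw [h']
        _ = Q⁻¹ * (x ^ (-(n:ℤ)) * y * x⁻¹) := by
            rw [← mul_assoc, ← ((hQ (x ^ (-(n:ℤ)))).inv_left.eq), mul_assoc, mul_assoc]
        _ = Q⁻¹ * (Q ^ (-(n:ℤ)) * (y * x ^ (-(n:ℤ))) * x⁻¹) := by rw [ih]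
        _ = Q ^ (-(n:ℤ)-1) * (y * x ^ (-(n:ℤ)-1)) := by
            rw [zpow_sub_one, zpow_sub_one, ← ((Commute.refl Q).inv_left.zpow_right (-(n:ℤ))).eq]
            group

lemma zpow_qcomm (Q x y : G) (hQ : ∀ g, Commute Q g)
    (h : x * y = Q * (y * x)) (a b : ℤ) :
    x ^ a * y ^ b = Q ^ (a * b) * (y ^ b * x ^ a) := by
  have h1 : ∀ c : ℤ, x ^ c * y = Q ^ c * (y * x ^ c) := zpow_qcomm_one Q x y hQ h
  have h2 : y * x ^ a = (Q ^ a)⁻¹ * (x ^ a * y) := by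
    rw [h1 a]; group
  have h3 := zpow_qcomm_one (Q ^ a)⁻¹ y (x ^ a)
    (fun g => ((hQ g).zpow_left a).inv_left) h2 b
  rw [h3, ← mul_assoc,
    show Q ^ (a*b) * ((Q ^ a)⁻¹) ^ b = 1 by
      rw [← zpow_neg, ← zpow_mul, ← zpow_add]; ring_nf; simp,
    one_mul]

lemma qcomm_symm (Q x g : G) (c : ℤ)
    (h : x * g = Q ^ c * (g * x)) : g * x = Q ^ (-c) * (x * g) := by
  rw [h]; group

lemma qcomm_mul (Q x g g' : G) (hQ : ∀ a, Commute Q a) (c c' : ℤ)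
    (h1 : x * g = Q ^ c * (g * x)) (h2 : x * g' = Q ^ c' * (g' * x)) :
    x * (g * g') = Q ^ (c + c') * (g * g' * x) := by
  calc x * (g * g') = (x * g) * g' := by group
    _ = Q ^ c * (g * (x * g')) := by rw [h1]; group
    _ = Q ^ c * (g * (Q ^ c' * (g' * x))) := by rw [h2]
    _ = Q ^ c * (Q ^ c' * (g * (g' * x))) := by
        rw [← mul_assoc g, ← ((hQ g).zpow_left c').eq, mul_assoc]
    _ = Q ^ (c + c') * (g * g' * x) := by rw [zpow_add]; group

lemma qcomm_mul_left (Q x g g' : G) (hQ : ∀ a, Commute Q a) (c c' : ℤ)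
    (h1 : g * x = Q ^ c * (x * g)) (h2 : g' * x = Q ^ c' * (x * g')) :
    (g * g') * x = Q ^ (c + c') * (x * (g * g')) := by
  calc (g * g') * x = g * (g' * x) := by group
    _ = g * (Q ^ c' * (x * g')) := by rw [h2]
    _ = Q ^ c' * ((g * x) * g') := by
        rw [← mul_assoc g, ← ((hQ g).zpow_left c').eq]; group
    _ = Q ^ c' * ((Q ^ c * (x * g)) * g') := by rw [h1]
    _ = Q ^ (c + c') * (x * (g * g')) := by rw [zpow_add]; group

end QcommLemmas

/-- For all integers `h, m, n, u, v, w`, the relation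
`[z₃^h z₂^m z₁^n, z₃^u z₂^v z₁^w] = (1 - q^H) · z₃^h z₂^m z₁^n · z₃^u z₂^v z₁^w`
holds in `A_q`, where `H = h(v-w) + m(w-u) + n(u-v)` and `[U,V] = UV - VU`. -/
theorem monomial_commutator_vs_product
    {F : Type*} [Field F] {A : Type*} [Ring A] [Algebra F A]
    (q : F) (hq : q ≠ 0)
    (z1 z2 z3 : Aˣ)
    (h12 : (↑z1 * ↑z2 : A) = q • (↑z2 * ↑z1 : A))
    (h23 : (↑z2 * ↑z3 : A) = q • (↑z3 * ↑z2 : A))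
    (h31 : (↑z3 * ↑z1 : A) = q • (↑z1 * ↑z3 : A))
    (b : Module.Basis (ℤ × ℤ × ℤ) F A)
    (hb : ∀ t : ℤ × ℤ × ℤ, b t = (↑(z3 ^ t.1 * z2 ^ t.2.1 * z1 ^ t.2.2) : A))
    (h m n u v w : ℤ) :
    (↑(z3 ^ h * z2 ^ m * z1 ^ n) : A) * (↑(z3 ^ u * z2 ^ v * z1 ^ w) : A) -
        (↑(z3 ^ u * z2 ^ v * z1 ^ w) : A) * (↑(z3 ^ h * z2 ^ m * z1 ^ n) : A) =
      (1 - q ^ (h * (v - w) + m * (w - u) + n * (u - v))) •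
        ((↑(z3 ^ h * z2 ^ m * z1 ^ n) : A) * (↑(z3 ^ u * z2 ^ v * z1 ^ w) : A)) := by
  -- the central unit Q corresponding to q
  set Q : Aˣ := Units.map (algebraMap F A : F →+* A).toMonoidHom (Units.mk0 q hq) with hQdef
  have hQval : (↑Q : A) = algebraMap F A q := rfl
  have hQzpow : ∀ c : ℤ, (↑(Q ^ c) : A) = algebraMap F A (q ^ c) := by
    intro c
    rw [hQdef, ← map_zpow]
    show (algebraMap F A) ((Units.mk0 q hq ^ c : Fˣ) : F) = _
    rw [Units.val_zpow_eq_zpow_val]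
    rfl
  have hQcentral : ∀ g : Aˣ, Commute Q g := by
    intro g
    apply Units.ext
    show (↑Q : A) * ↑g = ↑g * ↑Q
    rw [hQval, ← Algebra.commutes]
  -- lift the relations to Aˣ
  have u12 : z1 * z2 = Q * (z2 * z1) := by
    apply Units.ext
    show (↑z1 : A) * ↑z2 = ↑Q * (↑z2 * ↑z1)
    rw [h12, hQval, Algebra.smul_def]
  have u23 : z2 * z3 = Q * (z3 * z2) := by
    apply Units.ext
    show (↑z2 : A) * ↑z3 = ↑Q * (↑z3 * ↑z2)
    rw [h23, hQval, Algebra.smul_def]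
  have u31 : z3 * z1 = Q * (z1 * z3) := by
    apply Units.ext
    show (↑z3 : A) * ↑z1 = ↑Q * (↑z1 * ↑z3)
    rw [h31, hQval, Algebra.smul_def]
  -- pairwise zpow relations
  have e12 : ∀ a c : ℤ, z1 ^ a * z2 ^ c = Q ^ (a * c) * (z2 ^ c * z1 ^ a) :=
    zpow_qcomm Q z1 z2 hQcentral u12
  have e23 : ∀ a c : ℤ, z2 ^ a * z3 ^ c = Q ^ (a * c) * (z3 ^ c * z2 ^ a) :=
    zpow_qcomm Q z2 z3 hQcentral u23
  have e31 : ∀ a c : ℤ, z3 ^ a * z1 ^ c = Q ^ (a * c) * (z1 ^ c * z3 ^ a) :=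
    zpow_qcomm Q z3 z1 hQcentral u31
  set X : Aˣ := z3 ^ h * z2 ^ m * z1 ^ n with hX
  set Y : Aˣ := z3 ^ u * z2 ^ v * z1 ^ w with hY
  have triv1 : ∀ a c : ℤ, z1 ^ a * z1 ^ c = Q ^ (0:ℤ) * (z1 ^ c * z1 ^ a) := by
    intro a c; rw [zpow_zero, one_mul, ← zpow_add, ← zpow_add, add_comm]
  have triv3 : ∀ a c : ℤ, z3 ^ a * z3 ^ c = Q ^ (0:ℤ) * (z3 ^ c * z3 ^ a) := by
    intro a c; rw [zpow_zero, one_mul, ← zpow_add, ← zpow_add, add_comm]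
  -- z1^w past X
  have s1 : z1 ^ w * X = Q ^ ((-(h * w) + w * m) + 0) * (X * z1 ^ w) := by
    apply qcomm_mul Q (z1 ^ w) _ _ hQcentral
    · apply qcomm_mul Q (z1 ^ w) _ _ hQcentral
      · exact qcomm_symm Q (z3 ^ h) (z1 ^ w) (h * w) (e31 h w)
      · exact e12 w m
    · exact triv1 w n
  -- z2^v past X
  have s2 : z2 ^ v * X = Q ^ ((v * h + 0) + -(n * v)) * (X * z2 ^ v) := by
    apply qcomm_mul Q (z2 ^ v) _ _ hQcentral
    · apply qcomm_mul Q (z2 ^ v) _ _ hQcentral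
      · exact e23 v h
      · exact qcomm_symm Q (z2 ^ m) (z2 ^ v) 0 (by
          rw [zpow_zero, one_mul, ← zpow_add, ← zpow_add, add_comm])
    · exact qcomm_symm Q (z1 ^ n) (z2 ^ v) (n * v) (e12 n v)
  -- z3^u past X
  have s3 : z3 ^ u * X = Q ^ ((0 + -(m * u)) + u * n) * (X * z3 ^ u) := by
    apply qcomm_mul Q (z3 ^ u) _ _ hQcentral
    · apply qcomm_mul Q (z3 ^ u) _ _ hQcentral
      · exact triv3 u h
      · exact qcomm_symm Q (z2 ^ m) (z3 ^ u) (m * u) (e23 m u)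
    · exact e31 u n
  -- Y past X
  have key : Y * X = Q ^ ((((0 + -(m * u)) + u * n) + ((v * h + 0) + -(n * v))) +
      ((-(h * w) + w * m) + 0)) * (X * Y) := by
    rw [hY]
    apply qcomm_mul_left Q X _ _ hQcentral
    · apply qcomm_mul_left Q X _ _ hQcentral
      · exact s3
      · exact s2
    · exact s1
  have key2 : Y * X = Q ^ (h * (v - w) + m * (w - u) + n * (u - v)) * (X * Y) := by
    rw [key]; ring_nf
  -- pass to A
  have keyA : (↑Y : A) * ↑X = q ^ (h * (v - w) + m * (w - u) + n * (u - v)) • ((↑X : A) * ↑Y) := by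
    rw [← Units.val_mul, key2, Units.val_mul, hQzpow, ← Algebra.smul_def, Units.val_mul]
  rw [keyA, sub_smul, one_smul]
end

section
/- For every natural number T, the identities (ad z_1)^T([[z_3⁻¹, z_2⁻¹], z_2⁻¹]) = q^{−T} (1 − q)^{T+2} z_3⁻¹ z_2⁻² z_1^T and (ad z_1⁻¹)^T([[z_3⁻¹, z_2⁻¹], z_2⁻¹]) = (−1)^T (1 − q)^{T+2} z_3⁻¹ z_2⁻² z_1^{−T} hold in A_q. -/
/-- The commutator `[U,V] = UV - VU`. -/
def br {A : Type*} [Ring A] (U V : A) : A := U * V - V * U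

/-- The adjoint map `ad U : V ↦ [U,V] = UV - VU`. -/
def adMap {A : Type*} [Ring A] (U : A) : A → A := fun V => U * V - V * U

section aux
variable {F : Type*} [Field F] {A : Type*} [Ring A] [Algebra F A]

lemma swap_inv_left (u v : Aˣ) (c : F)
    (h : (↑u * ↑v : A) = c • (↑v * ↑u)) :
    (↑v * ↑u⁻¹ : A) = c • (↑u⁻¹ * ↑v) := by
  have h2 := congrArg (fun x : A => (↑u⁻¹ : A) * x * ↑u⁻¹) h
  simp only [mul_assoc, mul_smul_comm, Units.inv_mul_cancel_left] at h2
  simpa [← mul_assoc] using h2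

lemma swap_inv_right (u v : Aˣ) (c : F)
    (h : (↑u * ↑v : A) = c • (↑v * ↑u)) :
    (↑v⁻¹ * ↑u : A) = c • (↑u * ↑v⁻¹) := by
  have h2 := congrArg (fun x : A => (↑v⁻¹ : A) * x * ↑v⁻¹) h
  simp only [mul_assoc, mul_smul_comm, Units.inv_mul_cancel_left] at h2
  simpa [← mul_assoc] using h2

lemma swap_ext {u v : A} {c : F} (h : u * v = c • (v * u)) :
    ∀ a : A, u * (v * a) = c • (v * (u * a)) := fun a => by
  rw [← mul_assoc, h, smul_mul_assoc, mul_assoc]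
end aux

/-- For every natural number `T`, the identities
`(ad z₁)^T ([[z₃⁻¹, z₂⁻¹], z₂⁻¹]) = q^{-T} (1-q)^{T+2} z₃⁻¹ z₂⁻² z₁^T` and
`(ad z₁⁻¹)^T ([[z₃⁻¹, z₂⁻¹], z₂⁻¹]) = (-1)^T (1-q)^{T+2} z₃⁻¹ z₂⁻² z₁^{-T}`
hold in `A_q`. -/
theorem ad_iterate_identities
    {F : Type*} [Field F] {A : Type*} [Ring A] [Algebra F A]
    (q : F) (hq : q ≠ 0)
    (z1 z2 z3 : Aˣ)
    (h12 : (↑z1 * ↑z2 : A) = q • (↑z2 * ↑z1 : A))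
    (h23 : (↑z2 * ↑z3 : A) = q • (↑z3 * ↑z2 : A))
    (h31 : (↑z3 * ↑z1 : A) = q • (↑z1 * ↑z3 : A))
    (b : Module.Basis (ℤ × ℤ × ℤ) F A)
    (hb : ∀ t : ℤ × ℤ × ℤ, b t = (↑(z3 ^ t.1 * z2 ^ t.2.1 * z1 ^ t.2.2) : A))
    (T : ℕ) :
    (adMap (↑z1 : A))^[T] (br (br (↑z3⁻¹ : A) (↑z2⁻¹ : A)) (↑z2⁻¹ : A)) =
      (q ^ (-(T : ℤ)) * (1 - q) ^ (T + 2)) •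
        (↑(z3⁻¹ * z2 ^ (-2 : ℤ) * z1 ^ (T : ℤ)) : A) ∧
    (adMap (↑z1⁻¹ : A))^[T] (br (br (↑z3⁻¹ : A) (↑z2⁻¹ : A)) (↑z2⁻¹ : A)) =
      ((-1 : F) ^ T * (1 - q) ^ (T + 2)) •
        (↑(z3⁻¹ * z2 ^ (-2 : ℤ) * z1 ^ (-(T : ℤ))) : A) := by
  -- basic exchange relations
  have e31 : (↑z1 * ↑z3⁻¹ : A) = q • (↑z3⁻¹ * ↑z1) := swap_inv_left z3 z1 q h31
  have e12 : (↑z2⁻¹ * ↑z1 : A) = q • (↑z1 * ↑z2⁻¹) := swap_inv_right z1 z2 q h12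
  have e23 : (↑z2⁻¹ * ↑z3⁻¹ : A) = q • (↑z3⁻¹ * ↑z2⁻¹) :=
    swap_inv_left z3 z2⁻¹ q (swap_inv_left z2 z3 q h23)
  have e12' : (↑z1⁻¹ * ↑z2⁻¹ : A) = q • (↑z2⁻¹ * ↑z1⁻¹) :=
    swap_inv_left z2 z1⁻¹ q (swap_inv_left z1 z2 q h12)
  have e31' : (↑z3⁻¹ * ↑z1⁻¹ : A) = q • (↑z1⁻¹ * ↑z3⁻¹) :=
    swap_inv_left z1 z3⁻¹ q e31
  have e12i : (↑z1 * ↑z2⁻¹ : A) = q⁻¹ • (↑z2⁻¹ * ↑z1) := by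
    rw [e12, smul_smul, inv_mul_cancel₀ hq, one_smul]
  have e31i : (↑z1⁻¹ * ↑z3⁻¹ : A) = q⁻¹ • (↑z3⁻¹ * ↑z1⁻¹) := by
    rw [e31', smul_smul, inv_mul_cancel₀ hq, one_smul]
  set v : A := ↑z3⁻¹ * (↑z2⁻¹ * ↑z2⁻¹) with hv
  -- key commutation with the monomial v
  have key1 : (↑z1 : A) * v = q⁻¹ • (v * ↑z1) := by
    rw [hv, swap_ext e31, swap_ext e12i]
    simp only [e12i, mul_smul_comm, smul_smul, mul_assoc]
    match_scalars
    field_simp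
  have key2 : (↑z1⁻¹ : A) * v = q • (v * ↑z1⁻¹) := by
    rw [hv, swap_ext e31i, swap_ext e12']
    simp only [e12', mul_smul_comm, smul_smul, mul_assoc]
    match_scalars
    field_simp
  -- base case value
  have base : br (br (↑z3⁻¹ : A) (↑z2⁻¹ : A)) (↑z2⁻¹ : A) = ((1-q)*(1-q)) • v := by
    simp only [br, hv, sub_mul, mul_sub, mul_smul_comm, smul_mul_assoc,
      mul_assoc, e23, swap_ext e23, smul_sub, smul_smul]
    module
  -- iteration steps
  have step1 : ∀ (c : F) (n : ℕ),
      adMap (↑z1 : A) (c • (v * (↑z1 : A) ^ n))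
        = (c * (q⁻¹ - 1)) • (v * (↑z1 : A) ^ (n+1)) := by
    intro c n
    have hx : (↑z1 : A) * (↑z1 : A) ^ n = (↑z1 : A) ^ (n+1) := (pow_succ' _ _).symm
    have hx2 : (↑z1 : A) ^ n * (↑z1 : A) = (↑z1 : A) ^ (n+1) := (pow_succ _ _).symm
    simp only [adMap, mul_smul_comm, smul_mul_assoc, swap_ext key1, mul_assoc,
      hx, hx2, smul_smul]
    module
  have step2 : ∀ (c : F) (n : ℕ),
      adMap (↑z1⁻¹ : A) (c • (v * (↑z1⁻¹ : A) ^ n))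
        = (c * (q - 1)) • (v * (↑z1⁻¹ : A) ^ (n+1)) := by
    intro c n
    have hx : (↑z1⁻¹ : A) * (↑z1⁻¹ : A) ^ n = (↑z1⁻¹ : A) ^ (n+1) := (pow_succ' _ _).symm
    have hx2 : (↑z1⁻¹ : A) ^ n * (↑z1⁻¹ : A) = (↑z1⁻¹ : A) ^ (n+1) := (pow_succ _ _).symm
    simp only [adMap, mul_smul_comm, smul_mul_assoc, swap_ext key2, mul_assoc,
      hx, hx2, smul_smul]
    module
  -- monomial casts
  have hz2 : (z2 ^ (-2 : ℤ)) = z2⁻¹ * z2⁻¹ := by group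
  have hcpos : ∀ n : ℕ, (↑(z3⁻¹ * z2 ^ (-2 : ℤ) * z1 ^ (n : ℤ)) : A)
      = v * (↑z1 : A) ^ n := by
    intro n
    rw [hz2, zpow_natCast]
    simp [hv, Units.val_mul, mul_assoc]
  have hcneg : ∀ n : ℕ, (↑(z3⁻¹ * z2 ^ (-2 : ℤ) * z1 ^ (-(n : ℤ))) : A)
      = v * (↑z1⁻¹ : A) ^ n := by
    intro n
    have hinv : ((z1 ^ n)⁻¹ : Aˣ) = (z1⁻¹) ^ n := (inv_pow _ _).symm
    rw [hz2, zpow_neg, zpow_natCast, hinv]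
    simp [hv, Units.val_mul, mul_assoc, -inv_pow]
  -- induction
  induction T with
  | zero =>
      constructor
      · rw [Function.iterate_zero, id_eq, base, hcpos 0]
        simp only [pow_zero, mul_one]
        match_scalars
        norm_num
        ring
      · rw [Function.iterate_zero, id_eq, base, hcneg 0]
        simp only [pow_zero, mul_one]
        match_scalars
        norm_num
        ring
  | succ n ih =>
      obtain ⟨ih1, ih2⟩ := ih
      constructor
      · rw [Function.iterate_succ_apply', ih1, hcpos n, step1, hcpos (n+1)]
        congr 1
        have h1 : q ^ (-(n : ℤ)) = (q ^ n)⁻¹ := by rw [zpow_neg, zpow_natCast]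
        have h2 : q ^ (-((n+1 : ℕ) : ℤ)) = (q ^ (n+1))⁻¹ := by
          rw [zpow_neg, zpow_natCast]
        rw [h1, h2]
        field_simp
        ring
      · rw [Function.iterate_succ_apply', ih2, hcneg n, step2, hcneg (n+1)]
        congr 1
        ring
end

section
/- For every integer h, the identity [z_3 z_2² z_1, z_3⁻¹ z_2⁻² z_1^{h−1}] = q^{−3} (1 − q^h) z_1^h holds in A_q. -/
section Aux
variable {F : Type*} [Field F] {A : Type*} [Ring A] [Algebra F A]

lemma unit_inv_comm (c : F) (hc : c ≠ 0) (u v : Aˣ) (hcm : (↑u * ↑v : A) = c • (↑v * ↑u)) :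
    (↑u⁻¹ * ↑v : A) = c⁻¹ • (↑v * ↑u⁻¹) := by
  have h1 : (↑u⁻¹ : A) * (↑u * ↑v) * ↑u⁻¹ = ↑v * ↑u⁻¹ := by
    simp [← mul_assoc, mul_assoc]
  rw [hcm] at h1
  have h2 : (↑u⁻¹ : A) * (c • (↑v * ↑u)) * ↑u⁻¹ = c • (↑u⁻¹ * ↑v) := by
    simp [mul_smul_comm, smul_mul_assoc, mul_assoc]
  rw [h2] at h1
  rw [← h1, smul_smul, inv_mul_cancel₀ hc, one_smul]

lemma key1 (c : F) (hc : c ≠ 0) (u v : Aˣ) (hcm : (↑u * ↑v : A) = c • (↑v * ↑u)) (m : ℤ) :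
    (↑(u ^ m) * ↑v : A) = c ^ m • (↑v * ↑(u ^ m)) := by
  induction m using Int.induction_on with
  | zero => simp
  | succ k ih =>
    rw [zpow_add_one, Units.val_mul, mul_assoc, hcm, mul_smul_comm, ← mul_assoc, ih,
      smul_mul_assoc, smul_smul]
    rw [zpow_add_one₀ hc, mul_assoc, mul_comm c]
  | pred k ih =>
    have hi := unit_inv_comm c hc u v hcm
    rw [zpow_sub_one, Units.val_mul, mul_assoc, hi, mul_smul_comm, ← mul_assoc, ih,
      smul_mul_assoc, smul_smul]
    rw [zpow_sub_one₀ hc, mul_assoc, mul_comm c⁻¹]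

lemma key2 (c : F) (hc : c ≠ 0) (u v : Aˣ) (hcm : (↑u * ↑v : A) = c • (↑v * ↑u)) (m n : ℤ) :
    (↑(u ^ m) * ↑(v ^ n) : A) = c ^ (m * n) • (↑(v ^ n) * ↑(u ^ m)) := by
  have h1 := key1 c hc u v hcm m
  have h2 : (↑v * ↑(u ^ m) : A) = c ^ (-m) • (↑(u ^ m) * ↑v) := by
    rw [h1, smul_smul, ← zpow_add₀ hc]
    simp
  have h3 := key1 (c ^ (-m)) (zpow_ne_zero _ hc) v (u ^ m) h2 n
  rw [h3, smul_smul, ← zpow_mul, ← zpow_add₀ hc]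
  have e : m * n + -m * n = 0 := by ring
  rw [e, zpow_zero, one_smul]

lemma prod_form (q : F) (hq : q ≠ 0) (z1 z2 z3 : Aˣ)
    (h12 : (↑z1 * ↑z2 : A) = q • (↑z2 * ↑z1 : A))
    (h23 : (↑z2 * ↑z3 : A) = q • (↑z3 * ↑z2 : A))
    (h31 : (↑z3 * ↑z1 : A) = q • (↑z1 * ↑z3 : A))
    (a b c d e f : ℤ) :
    (↑(z3 ^ a * z2 ^ b * z1 ^ c) * ↑(z3 ^ d * z2 ^ e * z1 ^ f) : A) =
      q ^ (b * d + c * e - c * d) •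
        (↑(z3 ^ (a + d) * z2 ^ (b + e) * z1 ^ (c + f)) : A) := by
  have K12 := key2 q hq z1 z2 h12 c e
  have K23 := key2 q hq z2 z3 h23 b d
  have K31 := key2 q hq z3 z1 h31 d c
  have K13 : (↑(z1 ^ c) * ↑(z3 ^ d) : A) = q ^ (-(c * d)) • (↑(z3 ^ d) * ↑(z1 ^ c)) := by
    rw [K31, smul_smul, ← zpow_add₀ hq]
    have e1 : -(c * d) + d * c = 0 := by ring
    rw [e1, zpow_zero, one_smul]
  calc (↑(z3 ^ a * z2 ^ b * z1 ^ c) * ↑(z3 ^ d * z2 ^ e * z1 ^ f) : A)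
      = ↑(z3 ^ a) * ↑(z2 ^ b) * ((↑(z1 ^ c) * ↑(z3 ^ d)) * (↑(z2 ^ e) * ↑(z1 ^ f))) := by
        simp only [Units.val_mul, mul_assoc]
    _ = q ^ (-(c * d)) • (↑(z3 ^ a) * ((↑(z2 ^ b) * ↑(z3 ^ d)) * ((↑(z1 ^ c) * ↑(z2 ^ e)) * ↑(z1 ^ f)))) := by
        rw [K13]
        simp only [smul_mul_assoc, mul_smul_comm, mul_assoc]
    _ = q ^ (-(c * d)) • (↑(z3 ^ a) * ((q ^ (b * d) • (↑(z3 ^ d) * ↑(z2 ^ b))) * ((q ^ (c * e) • (↑(z2 ^ e) * ↑(z1 ^ c))) * ↑(z1 ^ f)))) := by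
        rw [K23, K12]
    _ = (q ^ (-(c * d)) * (q ^ (b * d) * q ^ (c * e))) • (↑(z3 ^ a) * (↑(z3 ^ d) * (↑(z2 ^ b) * (↑(z2 ^ e) * (↑(z1 ^ c) * ↑(z1 ^ f)))))) := by
        simp only [smul_mul_assoc, mul_smul_comm, mul_assoc, smul_smul]
        congr 1
        ring
    _ = q ^ (b * d + c * e - c * d) • (↑(z3 ^ (a + d) * z2 ^ (b + e) * z1 ^ (c + f)) : A) := by
        rw [← zpow_add₀ hq, ← zpow_add₀ hq]
        have e1 : -(c * d) + (b * d + c * e) = b * d + c * e - c * d := by ring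
        rw [e1]
        congr 1
        simp only [zpow_add, Units.val_mul, mul_assoc]

end Aux

/-- For every integer `h`, the identity
`[z₃ z₂² z₁, z₃⁻¹ z₂⁻² z₁^{h-1}] = q⁻³ (1 - q^h) z₁^h` holds in `A_q`. -/
theorem bracket_gives_z1_pow
    {F : Type*} [Field F] {A : Type*} [Ring A] [Algebra F A]
    (q : F) (hq : q ≠ 0)
    (z1 z2 z3 : Aˣ)
    (h12 : (↑z1 * ↑z2 : A) = q • (↑z2 * ↑z1 : A))
    (h23 : (↑z2 * ↑z3 : A) = q • (↑z3 * ↑z2 : A))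
    (h31 : (↑z3 * ↑z1 : A) = q • (↑z1 * ↑z3 : A))
    (b : Module.Basis (ℤ × ℤ × ℤ) F A)
    (hb : ∀ t : ℤ × ℤ × ℤ, b t = (↑(z3 ^ t.1 * z2 ^ t.2.1 * z1 ^ t.2.2) : A))
    (h : ℤ) :
    br (↑(z3 * z2 ^ 2 * z1) : A) (↑(z3⁻¹ * z2 ^ (-2 : ℤ) * z1 ^ (h - 1)) : A) =
      (q ^ (-3 : ℤ) * (1 - q ^ h)) • (↑(z1 ^ h) : A) := by
  have hU : z3 * z2 ^ 2 * z1 = z3 ^ (1 : ℤ) * z2 ^ (2 : ℤ) * z1 ^ (1 : ℤ) := by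
    rw [zpow_one, zpow_one, show (2:ℤ) = ((2:ℕ):ℤ) by norm_num, zpow_natCast]
  have hV : z3⁻¹ * z2 ^ (-2 : ℤ) * z1 ^ (h - 1)
      = z3 ^ (-1 : ℤ) * z2 ^ (-2 : ℤ) * z1 ^ (h - 1) := by
    norm_num
  rw [br, hU, hV]
  have hUV := prod_form q hq z1 z2 z3 h12 h23 h31 1 2 1 (-1) (-2) (h - 1)
  have hVU := prod_form q hq z1 z2 z3 h12 h23 h31 (-1) (-2) (h - 1) 1 2 1
  have e1 : (2 * (-1) + 1 * (-2) - 1 * (-1) : ℤ) = -3 := by norm_num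
  have e2 : ((-2) * 1 + (h - 1) * 2 - (h - 1) * 1 : ℤ) = h - 3 := by ring
  have e3 : (1 + (-1) : ℤ) = 0 := by norm_num
  have e4 : (2 + (-2) : ℤ) = 0 := by norm_num
  have e5 : (1 + (h - 1) : ℤ) = h := by ring
  have e6 : ((-1) + 1 : ℤ) = 0 := by norm_num
  have e7 : ((-2) + 2 : ℤ) = 0 := by norm_num
  have e8 : ((h - 1) + 1 : ℤ) = h := by ring
  rw [e1, e3, e4, e5] at hUV
  rw [e2, e6, e7, e8] at hVU
  simp only [zpow_zero, one_mul] at hUV hVU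
  rw [hUV, hVU, ← sub_smul]
  congr 1
  rw [mul_sub, mul_one, ← zpow_add₀ hq]
  ring_nf
end

section
/- For every nonzero integer h, the elements z_3^h, z_2^h, and z_1^h of A_q belong to L_q. -/
attribute [local instance 100] LieRing.ofAssociativeRing

section Aux
variable {F : Type*} [Field F] {A : Type*} [Ring A] [Algebra F A]

lemma comm_zpow (q : F) (hq : q ≠ 0) (u v : Aˣ)
    (huv : (↑u * ↑v : A) = q • (↑v * ↑u)) :
    ∀ h : ℤ, (↑(u ^ h) * ↑v : A) = q ^ h • (↑v * ↑(u ^ h)) := by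
  have hinv : (↑u⁻¹ * ↑v : A) = q⁻¹ • (↑v * ↑u⁻¹) := by
    have h1 : (↑v : A) = q • (↑u⁻¹ * (↑v * ↑u)) := by
      have := congrArg (fun x => (↑u⁻¹ : A) * x) huv
      simpa [mul_assoc, Units.inv_mul, mul_smul_comm] using this
    have h2 : (↑v * ↑u⁻¹ : A) = q • (↑u⁻¹ * ↑v) := by
      have := congrArg (fun x => x * (↑u⁻¹ : A)) h1
      simpa [mul_assoc, Units.mul_inv, smul_mul_assoc] using this
    rw [h2, smul_smul, inv_mul_cancel₀ hq, one_smul]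
  intro h
  induction h using Int.induction_on with
  | zero => simp
  | succ n ih =>
      have : u ^ ((n : ℤ) + 1) = u ^ (n : ℤ) * u := by rw [zpow_add_one]
      rw [this, Units.val_mul, zpow_add_one₀ hq]
      calc (↑(u ^ (n:ℤ)) * ↑u * ↑v : A)
          = ↑(u ^ (n:ℤ)) * (↑u * ↑v) := by rw [mul_assoc]
        _ = q • (↑(u ^ (n:ℤ)) * ↑v * ↑u) := by rw [huv]; simp [mul_smul_comm, mul_assoc]
        _ = q • ((q ^ (n:ℤ) • (↑v * ↑(u ^ (n:ℤ)))) * ↑u) := by rw [ih]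
        _ = (q ^ (n:ℤ) * q) • (↑v * (↑(u ^ (n:ℤ)) * ↑u)) := by
            rw [smul_mul_assoc, smul_smul, mul_assoc, mul_comm q]
  | pred n ih =>
      have : u ^ (-(n : ℤ) - 1) = u ^ (-(n : ℤ)) * u⁻¹ := by
        rw [← zpow_neg_one, ← zpow_add]; ring_nf
      rw [this, Units.val_mul, sub_eq_add_neg, zpow_add₀ hq, zpow_neg_one]
      calc (↑(u ^ (-(n:ℤ))) * ↑u⁻¹ * ↑v : A)
          = ↑(u ^ (-(n:ℤ))) * (↑u⁻¹ * ↑v) := by rw [mul_assoc]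
        _ = q⁻¹ • (↑(u ^ (-(n:ℤ))) * ↑v * ↑u⁻¹) := by rw [hinv]; simp [mul_smul_comm, mul_assoc]
        _ = q⁻¹ • ((q ^ (-(n:ℤ)) • (↑v * ↑(u ^ (-(n:ℤ))))) * ↑u⁻¹) := by rw [ih]
        _ = (q ^ (-(n:ℤ)) * q⁻¹) • (↑v * (↑(u ^ (-(n:ℤ))) * ↑u⁻¹)) := by
            rw [smul_mul_assoc, smul_smul, mul_assoc, mul_comm q⁻¹]

lemma smul_mem_cancel (L : LieSubalgebra F A) {c : F} (hc : c ≠ 0) {x : A}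
    (hx : c • x ∈ L) : x ∈ L := by
  have := L.smul_mem c⁻¹ hx
  rwa [smul_smul, inv_mul_cancel₀ hc, one_smul] at this

lemma pair_zpow_mem (q : F) (hq : q ≠ 0) (hq1 : q ≠ 1)
    (hzp : ∀ h : ℤ, h ≠ 0 → q ^ h ≠ 1)
    (L : LieSubalgebra F A) (u v : Aˣ)
    (huv : (↑u * ↑v : A) = q • (↑v * ↑u))
    (hu : (↑u : A) ∈ L) (hui : (↑u⁻¹ : A) ∈ L)
    (hv : (↑v : A) ∈ L) (hvi : (↑v⁻¹ : A) ∈ L)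
    (h : ℤ) (hh : h ≠ 0) : (↑(u ^ h) : A) ∈ L := by
  have hinv : (↑u⁻¹ * ↑v : A) = q⁻¹ • (↑v * ↑u⁻¹) := by
    have h1 : (↑v : A) = q • (↑u⁻¹ * (↑v * ↑u)) := by
      have := congrArg (fun x => (↑u⁻¹ : A) * x) huv
      simpa [mul_assoc, Units.inv_mul, mul_smul_comm] using this
    have h2 : (↑v * ↑u⁻¹ : A) = q • (↑u⁻¹ * ↑v) := by
      have := congrArg (fun x => x * (↑u⁻¹ : A)) h1
      simpa [mul_assoc, Units.mul_inv, smul_mul_assoc] using this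
    rw [h2, smul_smul, inv_mul_cancel₀ hq, one_smul]
  -- step 1: v * u^h ∈ L for all h
  have key : ∀ k : ℤ, (↑v * ↑(u ^ k) : A) ∈ L := by
    intro k
    induction k using Int.induction_on with
    | zero => simpa using hv
    | succ n ih =>
        have hb : ⁅(↑v * ↑(u ^ (n:ℤ)) : A), (↑u : A)⁆ ∈ L := L.lie_mem ih hu
        have hcomp : ⁅(↑v * ↑(u ^ (n:ℤ)) : A), (↑u : A)⁆
            = (1 - q) • (↑v * ↑(u ^ ((n:ℤ) + 1))) := by
          have hpow : u ^ ((n : ℤ) + 1) = u ^ (n : ℤ) * u := by rw [zpow_add_one]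
          rw [Ring.lie_def, hpow, Units.val_mul, sub_smul, one_smul]
          congr 1
          · rw [mul_assoc]
          · calc (↑u * (↑v * ↑(u ^ (n:ℤ))) : A)
                = (↑u * ↑v) * ↑(u ^ (n:ℤ)) := by rw [mul_assoc]
              _ = q • (↑v * (↑(u ^ (n:ℤ)) * ↑u)) := by
                  rw [huv, smul_mul_assoc, mul_assoc]
                  have hc : (↑u * ↑(u ^ (n:ℤ)) : A) = ↑(u ^ (n:ℤ)) * ↑u := by
                    rw [← Units.val_mul, ← Units.val_mul,
                      ((Commute.refl u).zpow_right (n:ℤ)).eq]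
                  rw [hc]
        rw [hcomp] at hb
        exact smul_mem_cancel L (sub_ne_zero.mpr (Ne.symm hq1)) hb
    | pred n ih =>
        have hb : ⁅(↑v * ↑(u ^ (-(n:ℤ))) : A), (↑u⁻¹ : A)⁆ ∈ L := L.lie_mem ih hui
        have hq1' : q⁻¹ ≠ 1 := by
          intro he; exact hq1 (by rw [← inv_inv q, he, inv_one])
        have hcomp : ⁅(↑v * ↑(u ^ (-(n:ℤ))) : A), (↑u⁻¹ : A)⁆
            = (1 - q⁻¹) • (↑v * ↑(u ^ (-(n:ℤ) - 1))) := by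
          have hpow : u ^ (-(n : ℤ) - 1) = u ^ (-(n : ℤ)) * u⁻¹ := by
            rw [← zpow_neg_one, ← zpow_add]; ring_nf
          rw [Ring.lie_def, hpow, Units.val_mul, sub_smul, one_smul]
          congr 1
          · rw [mul_assoc]
          · calc (↑u⁻¹ * (↑v * ↑(u ^ (-(n:ℤ)))) : A)
                = (↑u⁻¹ * ↑v) * ↑(u ^ (-(n:ℤ))) := by rw [mul_assoc]
              _ = q⁻¹ • (↑v * (↑(u ^ (-(n:ℤ))) * ↑u⁻¹)) := by
                  rw [hinv, smul_mul_assoc, mul_assoc]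
                  have hc : (↑u⁻¹ * ↑(u ^ (-(n:ℤ))) : A) = ↑(u ^ (-(n:ℤ))) * ↑u⁻¹ := by
                    rw [← Units.val_mul, ← Units.val_mul,
                      (((Commute.refl u).inv_left).zpow_right (-(n:ℤ))).eq]
                  rw [hc]
        rw [hcomp] at hb
        exact smul_mem_cancel L (sub_ne_zero.mpr (Ne.symm hq1')) hb
  -- step 2: bracket with v⁻¹
  have hb : ⁅(↑v * ↑(u ^ h) : A), (↑v⁻¹ : A)⁆ ∈ L := L.lie_mem (key h) hvi
  have hcomm := comm_zpow q hq u v huv h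
  have hcomp : ⁅(↑v * ↑(u ^ h) : A), (↑v⁻¹ : A)⁆ = (q ^ (-h) - 1) • (↑(u ^ h) : A) := by
    rw [Ring.lie_def, sub_smul, one_smul]
    congr 1
    · -- v * u^h * v⁻¹ = q^(-h) • u^h
      rw [mul_assoc]
      have := congrArg (fun x => (q : F) ^ (-h) • (x * (↑v⁻¹ : A))) hcomm
      simpa [mul_assoc, Units.mul_inv, smul_smul, smul_mul_assoc,
        inv_mul_cancel₀ (zpow_ne_zero h hq)] using this.symm
    · rw [← mul_assoc, Units.inv_mul, one_mul]
  rw [hcomp] at hb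
  have hne : q ^ (-h) - 1 ≠ 0 := sub_ne_zero.mpr (hzp (-h) (neg_ne_zero.mpr hh))
  exact smul_mem_cancel L hne hb

end Aux

/-- `L_q`: the Lie subalgebra of `A_q` (under the commutator bracket `[U,V] = UV - VU`)
generated by `z₁, z₁⁻¹, z₂, z₂⁻¹, z₃, z₃⁻¹`. -/
def LqSub (F : Type*) [Field F] {A : Type*} [Ring A] [Algebra F A]
    (z1 z2 z3 : Aˣ) : LieSubalgebra F A :=
  LieSubalgebra.lieSpan F A
    {(↑z1 : A), (↑z1⁻¹ : A), (↑z2 : A), (↑z2⁻¹ : A), (↑z3 : A), (↑z3⁻¹ : A)}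

/-- For any nonzero integer `h`, the elements `z₃^h`, `z₂^h`, `z₁^h`
of `A_q` belong to `L_q`. -/
theorem zpow_mem_Lq
    {F : Type*} [Field F] {A : Type*} [Ring A] [Algebra F A]
    (q : F) (hq : q ≠ 0) (hqru : ∀ n : ℕ, 0 < n → q ^ n ≠ 1)
    (z1 z2 z3 : Aˣ)
    (h12 : (↑z1 * ↑z2 : A) = q • (↑z2 * ↑z1 : A))
    (h23 : (↑z2 * ↑z3 : A) = q • (↑z3 * ↑z2 : A))
    (h31 : (↑z3 * ↑z1 : A) = q • (↑z1 * ↑z3 : A))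
    (b : Module.Basis (ℤ × ℤ × ℤ) F A)
    (hb : ∀ t : ℤ × ℤ × ℤ, b t = (↑(z3 ^ t.1 * z2 ^ t.2.1 * z1 ^ t.2.2) : A))
    (h : ℤ) (hh : h ≠ 0) :
    (↑(z3 ^ h) : A) ∈ LqSub F z1 z2 z3 ∧
    (↑(z2 ^ h) : A) ∈ LqSub F z1 z2 z3 ∧
    (↑(z1 ^ h) : A) ∈ LqSub F z1 z2 z3 := by
  have hq1 : q ≠ 1 := by simpa using hqru 1 one_pos
  have hzp : ∀ k : ℤ, k ≠ 0 → q ^ k ≠ 1 := by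
    intro k hk he
    have hpos : 0 < k.natAbs := Int.natAbs_pos.mpr hk
    apply hqru k.natAbs hpos
    rcases Int.natAbs_eq k with h' | h'
    · rw [← zpow_natCast]; rw [h'] at he; exact he
    · have : q ^ (-(k.natAbs : ℤ)) = 1 := by rw [← h']; exact he
      rw [zpow_neg, inv_eq_one, zpow_natCast] at this
      exact this
  set L := LqSub F z1 z2 z3 with hL
  have mem : ∀ x ∈ ({(↑z1 : A), (↑z1⁻¹ : A), (↑z2 : A), (↑z2⁻¹ : A), (↑z3 : A), (↑z3⁻¹ : A)} : Set A), x ∈ L :=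
    fun x hx => LieSubalgebra.subset_lieSpan hx
  have m1 : (↑z1 : A) ∈ L := mem _ (by simp)
  have m1i : (↑z1⁻¹ : A) ∈ L := mem _ (by simp)
  have m2 : (↑z2 : A) ∈ L := mem _ (by simp)
  have m2i : (↑z2⁻¹ : A) ∈ L := mem _ (by simp)
  have m3 : (↑z3 : A) ∈ L := mem _ (by simp)
  have m3i : (↑z3⁻¹ : A) ∈ L := mem _ (by simp)
  exact ⟨pair_zpow_mem q hq hq1 hzp L z3 z1 h31 m3 m3i m1 m1i h hh,
         pair_zpow_mem q hq hq1 hzp L z2 z3 h23 m2 m2i m3 m3i h hh,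
         pair_zpow_mem q hq hq1 hzp L z1 z2 h12 m1 m1i m2 m2i h hh⟩
end

section
/- For all nonzero integers h, m, n: the elements z_3^h z_2^m, z_3^h z_1^m, and z_2^h z_1^m belong to L_q; if h ≠ m then z_3^h z_2^m z_1^n belongs to L_q; and if h ≠ n then z_3^h z_2^h z_1^n belongs to L_q. -/
attribute [local instance] LieRing.ofAssociativeRing

section
variable {F : Type*} [Field F] {A : Type*} [Ring A] [Algebra F A]

private lemma smul_flip' {c : F} (hc : c ≠ 0) {x y : A} (h : x = c • y) :
    y = c⁻¹ • x := by rw [h, inv_smul_smul₀ hc]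

private lemma comm_pow1 {r : F} (hr : r ≠ 0) {u v : Aˣ}
    (h : (↑u : A) * ↑v = r • ((↑v : A) * ↑u)) (a : ℤ) :
    (↑(u ^ a) : A) * ↑v = r ^ a • ((↑v : A) * ↑(u ^ a)) := by
  have hvu : (↑v : A) * ↑u = r⁻¹ • ((↑u : A) * ↑v) := smul_flip' hr h
  have hinv : (↑(u⁻¹) : A) * ↑v = r⁻¹ • ((↑v : A) * ↑(u⁻¹)) := by
    calc (↑(u⁻¹) : A) * ↑v = ↑(u⁻¹) * ((↑v * ↑u) * ↑(u⁻¹)) := by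
          rw [Units.mul_inv_cancel_right]
      _ = ↑(u⁻¹) * ((r⁻¹ • ((↑u : A) * ↑v)) * ↑(u⁻¹)) := by rw [hvu]
      _ = r⁻¹ • (((↑(u⁻¹) : A) * ↑u) * (↑v * ↑(u⁻¹))) := by
          simp only [smul_mul_assoc, mul_smul_comm, mul_assoc]
      _ = r⁻¹ • ((↑v : A) * ↑(u⁻¹)) := by
          norm_cast
          rw [inv_mul_cancel]
          simp [mul_assoc]
  induction a using Int.induction_on with
  | zero => simp
  | succ n ih =>
      have e : u ^ ((n : ℤ) + 1) = u ^ (n : ℤ) * u := zpow_add_one u n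
      rw [e, Units.val_mul]
      calc (↑(u ^ (n : ℤ)) : A) * ↑u * ↑v
          = ↑(u ^ (n : ℤ)) * (r • ((↑v : A) * ↑u)) := by rw [mul_assoc, h]
        _ = r • (((↑(u ^ (n : ℤ)) : A) * ↑v) * ↑u) := by
            simp only [mul_smul_comm, mul_assoc]
        _ = r • ((r ^ (n : ℤ) • ((↑v : A) * ↑(u ^ (n : ℤ)))) * ↑u) := by rw [ih]
        _ = (r * r ^ (n : ℤ)) • ((↑v : A) * (↑(u ^ (n : ℤ)) * ↑u)) := by
            simp only [smul_mul_assoc, smul_smul, mul_assoc]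
        _ = r ^ ((n : ℤ) + 1) • ((↑v : A) * (↑(u ^ (n : ℤ)) * ↑u)) := by
            rw [zpow_add_one₀ hr, mul_comm]
  | pred n ih =>
      have e : u ^ (-(n : ℤ) - 1) = u ^ (-(n : ℤ)) * u⁻¹ := zpow_sub_one u (-n)
      rw [e, Units.val_mul]
      calc (↑(u ^ (-(n : ℤ))) : A) * ↑(u⁻¹) * ↑v
          = ↑(u ^ (-(n : ℤ))) * (r⁻¹ • ((↑v : A) * ↑(u⁻¹))) := by rw [mul_assoc, hinv]
        _ = r⁻¹ • (((↑(u ^ (-(n : ℤ))) : A) * ↑v) * ↑(u⁻¹)) := by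
            simp only [mul_smul_comm, mul_assoc]
        _ = r⁻¹ • ((r ^ (-(n : ℤ)) • ((↑v : A) * ↑(u ^ (-(n : ℤ))))) * ↑(u⁻¹)) := by rw [ih]
        _ = (r⁻¹ * r ^ (-(n : ℤ))) • ((↑v : A) * (↑(u ^ (-(n : ℤ))) * ↑(u⁻¹))) := by
            simp only [smul_mul_assoc, smul_smul, mul_assoc]
        _ = r ^ (-(n : ℤ) - 1) • ((↑v : A) * (↑(u ^ (-(n : ℤ))) * ↑(u⁻¹))) := by
            rw [zpow_sub₀ hr, zpow_one, div_eq_mul_inv, mul_comm]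


private lemma comm_pow {r : F} (hr : r ≠ 0) {u v : Aˣ}
    (h : (↑u : A) * ↑v = r • ((↑v : A) * ↑u)) (a b : ℤ) :
    (↑(u ^ a) : A) * ↑(v ^ b) = r ^ (a * b) • ((↑(v ^ b) : A) * ↑(u ^ a)) := by
  have h1 := comm_pow1 hr h a
  have hra : r ^ a ≠ 0 := zpow_ne_zero _ hr
  have h2 : (↑v : A) * ↑(u ^ a) = (r ^ a)⁻¹ • ((↑(u ^ a) : A) * ↑v) := smul_flip' hra h1
  have h3 := comm_pow1 (inv_ne_zero hra) h2 b
  have h4 := smul_flip' (zpow_ne_zero b (inv_ne_zero hra)) h3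
  rw [h4]
  congr 1
  rw [inv_zpow, inv_inv, ← zpow_mul]


structure Hyp (q : F) (z1 z2 z3 : Aˣ) : Prop where
  hq : q ≠ 0
  hqk : ∀ k : ℤ, k ≠ 0 → q ^ k ≠ 1
  h12 : (↑z1 * ↑z2 : A) = q • (↑z2 * ↑z1 : A)
  h23 : (↑z2 * ↑z3 : A) = q • (↑z3 * ↑z2 : A)
  h31 : (↑z3 * ↑z1 : A) = q • (↑z1 * ↑z3 : A)

variable {q : F} {z1 z2 z3 : Aˣ}

private lemma zpow_ne' (H : Hyp q z1 z2 z3) {j k : ℤ} (hjk : j ≠ k) : q ^ j ≠ q ^ k := by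
  intro he
  exact H.hqk (j - k) (sub_ne_zero.mpr hjk)
    (by rw [zpow_sub₀ H.hq, he, div_self (zpow_ne_zero _ H.hq)])

private lemma prod_formula_s11 (H : Hyp q z1 z2 z3) (a b c d e f : ℤ) :
    (↑(z3 ^ a * z2 ^ b * z1 ^ c) : A) * ↑(z3 ^ d * z2 ^ e * z1 ^ f)
      = q ^ (b * d - c * d + c * e) • (↑(z3 ^ (a + d) * z2 ^ (b + e) * z1 ^ (c + f)) : A) := by
  have h13 : (↑z1 * ↑z3 : A) = q⁻¹ • (↑z3 * ↑z1 : A) := smul_flip' H.hq H.h31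
  have c13 : (↑(z1 ^ c) : A) * ↑(z3 ^ d)
      = (q⁻¹) ^ (c * d) • ((↑(z3 ^ d) : A) * ↑(z1 ^ c)) :=
    comm_pow (inv_ne_zero H.hq) h13 c d
  have c23 : (↑(z2 ^ b) : A) * ↑(z3 ^ d)
      = q ^ (b * d) • ((↑(z3 ^ d) : A) * ↑(z2 ^ b)) := comm_pow H.hq H.h23 b d
  have c12 : (↑(z1 ^ c) : A) * ↑(z2 ^ e)
      = q ^ (c * e) • ((↑(z2 ^ e) : A) * ↑(z1 ^ c)) := comm_pow H.hq H.h12 c e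
  simp only [Units.val_mul]
  calc (↑(z3 ^ a) : A) * ↑(z2 ^ b) * ↑(z1 ^ c) * ((↑(z3 ^ d) : A) * ↑(z2 ^ e) * ↑(z1 ^ f))
      = (↑(z3 ^ a) : A) * (↑(z2 ^ b) * (((↑(z1 ^ c) : A) * ↑(z3 ^ d)) * (↑(z2 ^ e) * ↑(z1 ^ f)))) := by
        simp only [mul_assoc]
    _ = (↑(z3 ^ a) : A) * (↑(z2 ^ b) * (((q⁻¹) ^ (c * d) • ((↑(z3 ^ d) : A) * ↑(z1 ^ c))) * (↑(z2 ^ e) * ↑(z1 ^ f)))) := by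
        rw [c13]
    _ = (q⁻¹) ^ (c * d) • ((↑(z3 ^ a) : A) * ((↑(z2 ^ b) * ↑(z3 ^ d)) * ((↑(z1 ^ c) * ↑(z2 ^ e)) * ↑(z1 ^ f)))) := by
        simp only [smul_mul_assoc, mul_smul_comm, mul_assoc]
    _ = (q⁻¹) ^ (c * d) • ((↑(z3 ^ a) : A) * ((q ^ (b * d) • ((↑(z3 ^ d) : A) * ↑(z2 ^ b))) * ((q ^ (c * e) • ((↑(z2 ^ e) : A) * ↑(z1 ^ c))) * ↑(z1 ^ f)))) := by
        rw [c23, c12]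
    _ = ((q⁻¹) ^ (c * d) * (q ^ (b * d) * q ^ (c * e))) • ((↑(z3 ^ a) * ↑(z3 ^ d)) * ((↑(z2 ^ b) * ↑(z2 ^ e)) * ((↑(z1 ^ c) : A) * ↑(z1 ^ f)))) := by
        simp only [smul_mul_assoc, mul_smul_comm, smul_smul, mul_assoc]
        congr 1
        ring
    _ = q ^ (b * d - c * d + c * e) • ((↑(z3 ^ (a + d)) : A) * ↑(z2 ^ (b + e)) * ↑(z1 ^ (c + f))) := by
        rw [zpow_add z3, zpow_add z2, zpow_add z1]
        simp only [Units.val_mul, mul_assoc]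
        congr 1
        rw [inv_zpow, ← zpow_neg, ← zpow_add₀ H.hq, ← zpow_add₀ H.hq]
        congr 1
        ring

private lemma lie_formula (H : Hyp q z1 z2 z3) (a b c d e f : ℤ) :
    ⁅(↑(z3 ^ a * z2 ^ b * z1 ^ c) : A), (↑(z3 ^ d * z2 ^ e * z1 ^ f) : A)⁆
      = (q ^ (b * d - c * d + c * e) - q ^ (e * a - f * a + f * b))
          • (↑(z3 ^ (a + d) * z2 ^ (b + e) * z1 ^ (c + f)) : A) := by
  rw [Ring.lie_def, prod_formula_s11 H a b c d e f, prod_formula_s11 H d e f a b c,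
    add_comm d a, add_comm e b, add_comm f c, sub_smul]

private lemma step_mem (H : Hyp q z1 z2 z3) {a b c d e f : ℤ}
    (h1 : (↑(z3 ^ a * z2 ^ b * z1 ^ c) : A) ∈ LqSub F z1 z2 z3)
    (h2 : (↑(z3 ^ d * z2 ^ e * z1 ^ f) : A) ∈ LqSub F z1 z2 z3)
    (hne : b * d - c * d + c * e ≠ e * a - f * a + f * b) :
    (↑(z3 ^ (a + d) * z2 ^ (b + e) * z1 ^ (c + f)) : A) ∈ LqSub F z1 z2 z3 := by
  have hlie := (LqSub F z1 z2 z3).lie_mem h1 h2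
  rw [lie_formula H a b c d e f] at hlie
  have hc : q ^ (b * d - c * d + c * e) - q ^ (e * a - f * a + f * b) ≠ 0 :=
    sub_ne_zero.mpr (zpow_ne' H hne)
  have hs := (LqSub F z1 z2 z3).smul_mem
    (q ^ (b * d - c * d + c * e) - q ^ (e * a - f * a + f * b))⁻¹ hlie
  rwa [inv_smul_smul₀ hc] at hs



-- generators

private lemma gen3 (s : ℤ) (hs : s = 1 ∨ s = -1) :
    (↑(z3 ^ s * z2 ^ (0 : ℤ) * z1 ^ (0 : ℤ)) : A) ∈ LqSub F z1 z2 z3 := by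
  rcases hs with rfl | rfl
  · simpa [LqSub] using LieSubalgebra.subset_lieSpan (s := {(↑z1 : A), (↑z1⁻¹ : A), (↑z2 : A),
      (↑z2⁻¹ : A), (↑z3 : A), (↑z3⁻¹ : A)}) (show (↑z3 : A) ∈ _ by simp)
  · simpa [LqSub] using LieSubalgebra.subset_lieSpan (s := {(↑z1 : A), (↑z1⁻¹ : A), (↑z2 : A),
      (↑z2⁻¹ : A), (↑z3 : A), (↑z3⁻¹ : A)}) (show (↑z3⁻¹ : A) ∈ _ by simp)

private lemma gen2 (s : ℤ) (hs : s = 1 ∨ s = -1) :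
    (↑(z3 ^ (0 : ℤ) * z2 ^ s * z1 ^ (0 : ℤ)) : A) ∈ LqSub F z1 z2 z3 := by
  rcases hs with rfl | rfl
  · simpa [LqSub] using LieSubalgebra.subset_lieSpan (s := {(↑z1 : A), (↑z1⁻¹ : A), (↑z2 : A),
      (↑z2⁻¹ : A), (↑z3 : A), (↑z3⁻¹ : A)}) (show (↑z2 : A) ∈ _ by simp)
  · simpa [LqSub] using LieSubalgebra.subset_lieSpan (s := {(↑z1 : A), (↑z1⁻¹ : A), (↑z2 : A),
      (↑z2⁻¹ : A), (↑z3 : A), (↑z3⁻¹ : A)}) (show (↑z2⁻¹ : A) ∈ _ by simp)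

private lemma gen1 (s : ℤ) (hs : s = 1 ∨ s = -1) :
    (↑(z3 ^ (0 : ℤ) * z2 ^ (0 : ℤ) * z1 ^ s) : A) ∈ LqSub F z1 z2 z3 := by
  rcases hs with rfl | rfl
  · simpa [LqSub] using LieSubalgebra.subset_lieSpan (s := {(↑z1 : A), (↑z1⁻¹ : A), (↑z2 : A),
      (↑z2⁻¹ : A), (↑z3 : A), (↑z3⁻¹ : A)}) (show (↑z1 : A) ∈ _ by simp)
  · simpa [LqSub] using LieSubalgebra.subset_lieSpan (s := {(↑z1 : A), (↑z1⁻¹ : A), (↑z2 : A),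
      (↑z2⁻¹ : A), (↑z3 : A), (↑z3⁻¹ : A)}) (show (↑z1⁻¹ : A) ∈ _ by simp)

-- moves
private lemma mv3 (H : Hyp q z1 z2 z3) {a b c : ℤ} (s : ℤ) (hs : s = 1 ∨ s = -1)
    (hbc : b ≠ c) (h : (↑(z3 ^ a * z2 ^ b * z1 ^ c) : A) ∈ LqSub F z1 z2 z3) :
    (↑(z3 ^ (a + s) * z2 ^ b * z1 ^ c) : A) ∈ LqSub F z1 z2 z3 := by
  have h2 := step_mem H h (gen3 s hs) (by rcases hs with rfl | rfl <;> omega)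
  rwa [add_zero, add_zero] at h2

private lemma mv2 (H : Hyp q z1 z2 z3) {a b c : ℤ} (s : ℤ) (hs : s = 1 ∨ s = -1)
    (hca : c ≠ a) (h : (↑(z3 ^ a * z2 ^ b * z1 ^ c) : A) ∈ LqSub F z1 z2 z3) :
    (↑(z3 ^ a * z2 ^ (b + s) * z1 ^ c) : A) ∈ LqSub F z1 z2 z3 := by
  have h2 := step_mem H h (gen2 s hs) (by rcases hs with rfl | rfl <;> omega)
  rwa [add_zero, add_zero] at h2

private lemma mv1 (H : Hyp q z1 z2 z3) {a b c : ℤ} (s : ℤ) (hs : s = 1 ∨ s = -1)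
    (hab : a ≠ b) (h : (↑(z3 ^ a * z2 ^ b * z1 ^ c) : A) ∈ LqSub F z1 z2 z3) :
    (↑(z3 ^ a * z2 ^ b * z1 ^ (c + s)) : A) ∈ LqSub F z1 z2 z3 := by
  have h2 := step_mem H h (gen1 s hs) (by rcases hs with rfl | rfl <;> omega)
  rwa [add_zero, add_zero] at h2

-- rows
private lemma row3 (H : Hyp q z1 z2 z3) (k : ℤ) :
    (↑(z3 ^ k * z2 ^ (1 : ℤ) * z1 ^ (0 : ℤ)) : A) ∈ LqSub F z1 z2 z3 := by
  induction k using Int.induction_on with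
  | zero => exact gen2 1 (Or.inl rfl)
  | succ n ih => exact mv3 H 1 (Or.inl rfl) one_ne_zero ih
  | pred n ih =>
      have h2 := mv3 H (-1) (Or.inr rfl) one_ne_zero ih
      rwa [show (-(n : ℤ)) + -1 = -(n : ℤ) - 1 by ring] at h2

private lemma row2 (H : Hyp q z1 z2 z3) (k : ℤ) :
    (↑(z3 ^ (0 : ℤ) * z2 ^ k * z1 ^ (1 : ℤ)) : A) ∈ LqSub F z1 z2 z3 := by
  induction k using Int.induction_on with
  | zero => exact gen1 1 (Or.inl rfl)
  | succ n ih => exact mv2 H 1 (Or.inl rfl) one_ne_zero ih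
  | pred n ih =>
      have h2 := mv2 H (-1) (Or.inr rfl) one_ne_zero ih
      rwa [show (-(n : ℤ)) + -1 = -(n : ℤ) - 1 by ring] at h2

private lemma row1 (H : Hyp q z1 z2 z3) (k : ℤ) :
    (↑(z3 ^ (1 : ℤ) * z2 ^ (0 : ℤ) * z1 ^ k) : A) ∈ LqSub F z1 z2 z3 := by
  induction k using Int.induction_on with
  | zero => exact gen3 1 (Or.inl rfl)
  | succ n ih => exact mv1 H 1 (Or.inl rfl) one_ne_zero ih
  | pred n ih =>
      have h2 := mv1 H (-1) (Or.inr rfl) one_ne_zero ih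
      rwa [show (-(n : ℤ)) + -1 = -(n : ℤ) - 1 by ring] at h2

-- axes
private lemma axis3 (H : Hyp q z1 z2 z3) {a : ℤ} (ha : a ≠ 0) :
    (↑(z3 ^ a * z2 ^ (0 : ℤ) * z1 ^ (0 : ℤ)) : A) ∈ LqSub F z1 z2 z3 := by
  have h2 := mv2 H (-1) (Or.inr rfl) (Ne.symm ha) (row3 H a)
  · rwa [show (1 : ℤ) + -1 = 0 by ring] at h2

private lemma axis2 (H : Hyp q z1 z2 z3) {b : ℤ} (hb : b ≠ 0) :
    (↑(z3 ^ (0 : ℤ) * z2 ^ b * z1 ^ (0 : ℤ)) : A) ∈ LqSub F z1 z2 z3 := by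
  have h2 := mv1 H (-1) (Or.inr rfl) (Ne.symm hb) (row2 H b)
  rwa [show (1 : ℤ) + -1 = 0 by ring] at h2

private lemma axis1 (H : Hyp q z1 z2 z3) {c : ℤ} (hc : c ≠ 0) :
    (↑(z3 ^ (0 : ℤ) * z2 ^ (0 : ℤ) * z1 ^ c) : A) ∈ LqSub F z1 z2 z3 := by
  have h2 := mv3 H (-1) (Or.inr rfl) (Ne.symm hc) (row1 H c)
  rwa [show (1 : ℤ) + -1 = 0 by ring] at h2

private lemma sign_dec (x : ℤ) (hx : x ≠ 0) :
    ∃ s : ℤ, (s = 1 ∨ s = -1) ∧ (x - s).natAbs + 1 = x.natAbs := by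
  by_cases h : 0 < x
  · exact ⟨1, Or.inl rfl, by omega⟩
  · exact ⟨-1, Or.inr rfl, by omega⟩

private lemma main_mem (H : Hyp q z1 z2 z3) :
    ∀ (N : ℕ) (a b c : ℤ), a.natAbs + b.natAbs + c.natAbs ≤ N → ¬(a = b ∧ b = c) →
      (↑(z3 ^ a * z2 ^ b * z1 ^ c) : A) ∈ LqSub F z1 z2 z3 := by
  intro N
  induction N with
  | zero => intro a b c hle hne; exfalso; omega
  | succ N ih =>
    intro a b c hle hne
    by_cases h1 : b = 0 ∧ c = 0
    · obtain ⟨rfl, rfl⟩ := h1; exact axis3 H (by tauto)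
    by_cases h2 : a = 0 ∧ c = 0
    · obtain ⟨rfl, rfl⟩ := h2; exact axis2 H (by tauto)
    by_cases h3 : a = 0 ∧ b = 0
    · obtain ⟨rfl, rfl⟩ := h3; exact axis1 H (by tauto)
    by_cases hA : a ≠ b ∧ c ≠ 0
    · obtain ⟨s, hs, hnorm⟩ := sign_dec c hA.2
      have hpred := ih a b (c - s) (by omega) (by intro hcon; exact hA.1 hcon.1)
      have h4 := mv1 H s hs hA.1 hpred
      rwa [sub_add_cancel] at h4
    by_cases hB : b ≠ c ∧ a ≠ 0
    · obtain ⟨s, hs, hnorm⟩ := sign_dec a hB.2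
      have hpred := ih (a - s) b c (by omega) (by intro hcon; exact hB.1 hcon.2)
      have h4 := mv3 H s hs hB.1 hpred
      rwa [sub_add_cancel] at h4
    by_cases hC : c ≠ a ∧ b ≠ 0
    · obtain ⟨s, hs, hnorm⟩ := sign_dec b hC.2
      have hpred := ih a (b - s) c (by omega)
        (by intro hcon; exact hC.1 (hcon.2.symm.trans hcon.1.symm))
      have h4 := mv2 H s hs hC.1 hpred
      rwa [sub_add_cancel] at h4
    · exfalso
      push_neg at h1 h2 h3 hA hB hC
      omega


end

/-- For all nonzero integers `h, m, n`: the elements `z₃^h z₂^m`,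
`z₃^h z₁^m`, and `z₂^h z₁^m` belong to `L_q`; if `h ≠ m` then `z₃^h z₂^m z₁^n ∈ L_q`;
and if `h ≠ n` then `z₃^h z₂^h z₁^n ∈ L_q`. -/
theorem monomials_mem_Lq
    {F : Type*} [Field F] {A : Type*} [Ring A] [Algebra F A]
    (q : F) (hq : q ≠ 0) (hqru : ∀ n : ℕ, 0 < n → q ^ n ≠ 1)
    (z1 z2 z3 : Aˣ)
    (h12 : (↑z1 * ↑z2 : A) = q • (↑z2 * ↑z1 : A))
    (h23 : (↑z2 * ↑z3 : A) = q • (↑z3 * ↑z2 : A))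
    (h31 : (↑z3 * ↑z1 : A) = q • (↑z1 * ↑z3 : A))
    (b : Module.Basis (ℤ × ℤ × ℤ) F A)
    (hb : ∀ t : ℤ × ℤ × ℤ, b t = (↑(z3 ^ t.1 * z2 ^ t.2.1 * z1 ^ t.2.2) : A))
    (h m n : ℤ) (hh : h ≠ 0) (hm : m ≠ 0) (hn : n ≠ 0) :
    (↑(z3 ^ h * z2 ^ m) : A) ∈ LqSub F z1 z2 z3 ∧
    (↑(z3 ^ h * z1 ^ m) : A) ∈ LqSub F z1 z2 z3 ∧
    (↑(z2 ^ h * z1 ^ m) : A) ∈ LqSub F z1 z2 z3 ∧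
    (h ≠ m → (↑(z3 ^ h * z2 ^ m * z1 ^ n) : A) ∈ LqSub F z1 z2 z3) ∧
    (h ≠ n → (↑(z3 ^ h * z2 ^ h * z1 ^ n) : A) ∈ LqSub F z1 z2 z3) := by
  have hqk : ∀ k : ℤ, k ≠ 0 → q ^ k ≠ 1 := by
    intro k hk he
    rcases lt_trichotomy k 0 with hlt | rfl | hgt
    · have h2 : q ^ (-k) = 1 := by rw [zpow_neg, he, inv_one]
      exact hqru (-k).toNat (by omega)
        (by rw [← zpow_natCast, Int.toNat_of_nonneg (by omega)]; exact h2)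
    · exact hk rfl
    · exact hqru k.toNat (by omega)
        (by rw [← zpow_natCast, Int.toNat_of_nonneg (by omega)]; exact he)
  have H : Hyp q z1 z2 z3 := ⟨hq, hqk, h12, h23, h31⟩
  refine ⟨?_, ?_, ?_, fun hne => ?_, fun hne => ?_⟩
  · have := main_mem H (h.natAbs + m.natAbs + (0 : ℤ).natAbs) h m 0 le_rfl (by omega)
    simpa using this
  · have := main_mem H (h.natAbs + (0 : ℤ).natAbs + m.natAbs) h 0 m le_rfl (by omega)
    simpa using this
  · have := main_mem H ((0 : ℤ).natAbs + h.natAbs + m.natAbs) 0 h m le_rfl (by omega)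
    simpa using this
  · exact main_mem H (h.natAbs + m.natAbs + n.natAbs) h m n le_rfl (by omega)
  · exact main_mem H (h.natAbs + h.natAbs + n.natAbs) h h n le_rfl (by omega)
end

section
/- The set of monomials z_3^h z_2^m z_1^n, where (h, m, n) ranges over all triples of integers for which it is not the case that h = m = n, is an F-basis of the Lie algebra L_q; equivalently, L_q equals the F-linear span of these monomials. -/
attribute [local instance] LieRing.ofAssociativeRing

section aux
variable {F : Type*} [Field F] {A : Type*} [Ring A] [Algebra F A]

private lemma swap_through {c : F} {x y : A} (h : x * y = c • (y * x)) (z : A) :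
    x * (y * z) = c • (y * (x * z)) := by
  rw [← mul_assoc, h, smul_mul_assoc, mul_assoc]

/-- If `x` q-commutes with a unit `v`, it inversely-q-commutes with `v⁻¹`. -/
private lemma flipR {c : F} {x : A} {v : Aˣ} (h : x * ↑v = c • ((↑v : A) * x)) :
    x * ↑v⁻¹ = c⁻¹ • ((↑v⁻¹ : A) * x) := by
  by_cases hc : c = 0
  · subst hc
    have hx : x * ↑v = 0 := by simpa using h
    have : x = 0 := by
      have := congrArg (· * (↑v⁻¹ : A)) hx
      simpa [mul_assoc] using this
    simp [this]
  · have hvx : (↑v : A) * x = c⁻¹ • (x * ↑v) := by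
      rw [h, inv_smul_smul₀ hc]
    calc x * ↑v⁻¹ = ↑v⁻¹ * ((↑v * x) * ↑v⁻¹) := by
            rw [← mul_assoc, ← mul_assoc]; simp
      _ = ↑v⁻¹ * ((c⁻¹ • (x * ↑v)) * ↑v⁻¹) := by rw [hvx]
      _ = c⁻¹ • ((↑v⁻¹ : A) * x) := by
            simp [smul_mul_assoc, mul_smul_comm, mul_assoc]

private lemma flip' {c : F} {y : A} {u : Aˣ} (h : (↑u : A) * y = c • (y * ↑u)) :
    (↑u⁻¹ : A) * y = c⁻¹ • (y * ↑u⁻¹) := by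
  by_cases hc : c = 0
  · subst hc
    have hx : (↑u : A) * y = 0 := by simpa using h
    have : y = 0 := by
      have := congrArg ((↑u⁻¹ : A) * ·) hx
      simpa [← mul_assoc] using this
    simp [this]
  · have hvx : y * (↑u : A) = c⁻¹ • ((↑u : A) * y) := by
      rw [h, inv_smul_smul₀ hc]
    calc (↑u⁻¹ : A) * y = ↑u⁻¹ * ((y * ↑u) * ↑u⁻¹) := by
            rw [mul_assoc]; simp
      _ = ↑u⁻¹ * ((c⁻¹ • ((↑u : A) * y)) * ↑u⁻¹) := by rw [hvx]
      _ = c⁻¹ • (y * ↑u⁻¹) := by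
            rw [smul_mul_assoc, mul_smul_comm, ← mul_assoc, ← mul_assoc]; simp

private lemma swap1 {q : F} (hq : q ≠ 0) {u v : Aˣ}
    (h : (↑u * ↑v : A) = q • ((↑v : A) * ↑u)) :
    ∀ a : ℤ, ((↑(u ^ a) : A)) * ↑v = q ^ a • ((↑v : A) * ↑(u ^ a)) := by
  intro a
  induction a using Int.induction_on with
  | zero => simp
  | succ n ih =>
      have : (u : Aˣ) ^ ((n : ℤ) + 1) = u ^ (n : ℤ) * u := by
        rw [zpow_add_one]
      rw [this, Units.val_mul, mul_assoc, h, mul_smul_comm, ← mul_assoc, ih,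
        smul_mul_assoc, smul_smul, mul_assoc]
      rw [zpow_add_one₀ hq]
      ring_nf
  | pred n ih =>
      have hinv : (↑u⁻¹ : A) * ↑v = q⁻¹ • ((↑v : A) * ↑u⁻¹) := flip' h
      have : (u : Aˣ) ^ ((-n : ℤ) - 1) = u ^ (-n : ℤ) * u⁻¹ := by
        rw [zpow_sub_one]
      rw [this, Units.val_mul, mul_assoc, hinv, mul_smul_comm, ← mul_assoc, ih,
        smul_mul_assoc, smul_smul, mul_assoc]
      rw [zpow_sub_one₀ hq]
      ring_nf

private lemma swapZ {q : F} (hq : q ≠ 0) {u v : Aˣ}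
    (h : (↑u * ↑v : A) = q • ((↑v : A) * ↑u)) :
    ∀ a b : ℤ, ((↑(u ^ a) : A)) * ↑(v ^ b) = q ^ (a * b) • ((↑(v ^ b) : A) * ↑(u ^ a)) := by
  intro a b
  induction b using Int.induction_on with
  | zero => simp
  | succ n ih =>
      have hv : (v : Aˣ) ^ ((n : ℤ) + 1) = v ^ (n : ℤ) * v := by rw [zpow_add_one]
      rw [hv, Units.val_mul, ← mul_assoc, ih, smul_mul_assoc, mul_assoc, swap1 hq h a,
        mul_smul_comm, smul_smul, ← mul_assoc]
      rw [show a * ((n : ℤ) + 1) = a * n + a by ring, zpow_add₀ hq]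
  | pred n ih =>
      have hinv : ((↑(u ^ a) : A)) * ↑v⁻¹ = (q ^ a)⁻¹ • ((↑v⁻¹ : A) * ↑(u ^ a)) :=
        flipR (swap1 hq h a)
      have hv : (v : Aˣ) ^ ((-n : ℤ) - 1) = v ^ (-n : ℤ) * v⁻¹ := by rw [zpow_sub_one]
      rw [hv, Units.val_mul, ← mul_assoc, ih, smul_mul_assoc, mul_assoc, hinv,
        mul_smul_comm, smul_smul, ← mul_assoc]
      rw [show a * ((-n : ℤ) - 1) = a * (-n) + (-a) by ring, zpow_add₀ hq, zpow_neg]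
      rw [zpow_neg]


def qmono (z1 z2 z3 : Aˣ) (t : ℤ × ℤ × ℤ) : A :=
  ↑(z3 ^ t.1 * z2 ^ t.2.1 * z1 ^ t.2.2)

def qsig (t s : ℤ × ℤ × ℤ) : ℤ := t.2.1 * s.1 + t.2.2 * s.2.1 - t.2.2 * s.1

private lemma merge2 (w : Aˣ) (a b : ℤ) : (↑(w ^ a) : A) * ↑(w ^ b) = ↑(w ^ (a + b)) := by
  rw [← Units.val_mul, ← zpow_add]

private lemma merge3 (w : Aˣ) (a b : ℤ) (z : A) :
    (↑(w ^ a) : A) * ((↑(w ^ b) : A) * z) = (↑(w ^ (a + b)) : A) * z := by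
  rw [← mul_assoc, merge2]

lemma qmono_mul {q : F} (hq : q ≠ 0) {z1 z2 z3 : Aˣ}
    (h12 : (↑z1 * ↑z2 : A) = q • (↑z2 * ↑z1 : A))
    (h23 : (↑z2 * ↑z3 : A) = q • (↑z3 * ↑z2 : A))
    (h31 : (↑z3 * ↑z1 : A) = q • (↑z1 * ↑z3 : A))
    (t s : ℤ × ℤ × ℤ) :
    qmono z1 z2 z3 t * qmono z1 z2 z3 s = q ^ qsig t s • qmono z1 z2 z3 (t + s) := by
  obtain ⟨h, m, n⟩ := t
  obtain ⟨h', m', n'⟩ := s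
  have h13 : (↑z1 * ↑z3 : A) = q⁻¹ • (↑z3 * ↑z1 : A) := by
    rw [h31, inv_smul_smul₀ hq]
  have S13 := swapZ (inv_ne_zero hq) h13
  have S23 := swapZ hq h23
  have S12 := swapZ hq h12
  simp only [qmono, qsig, Prod.mk_add_mk, Units.val_mul, mul_assoc]
  rw [swap_through (S13 n h') ((↑(z2 ^ m') : A) * ↑(z1 ^ n')), mul_smul_comm, mul_smul_comm,
    swap_through (S23 m h') ((↑(z1 ^ n) : A) * ((↑(z2 ^ m') : A) * ↑(z1 ^ n'))), mul_smul_comm,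
    swap_through (S12 n m') (↑(z1 ^ n') : A), mul_smul_comm, mul_smul_comm, mul_smul_comm,
    merge3 z3 h h', merge3 z2 m m', merge2 z1 n n',
    smul_smul, smul_smul]
  congr 1
  rw [inv_zpow, ← zpow_neg, ← zpow_add₀ hq, ← zpow_add₀ hq]
  congr 1
  ring


lemma qmono_bracket {q : F} (hq : q ≠ 0) {z1 z2 z3 : Aˣ}
    (h12 : (↑z1 * ↑z2 : A) = q • (↑z2 * ↑z1 : A))
    (h23 : (↑z2 * ↑z3 : A) = q • (↑z3 * ↑z2 : A))
    (h31 : (↑z3 * ↑z1 : A) = q • (↑z1 * ↑z3 : A))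
    (t s : ℤ × ℤ × ℤ) :
    ⁅qmono z1 z2 z3 t, qmono z1 z2 z3 s⁆ =
      (q ^ qsig t s - q ^ qsig s t) • qmono z1 z2 z3 (t + s) := by
  rw [Ring.lie_def, qmono_mul hq h12 h23 h31, qmono_mul hq h12 h23 h31, add_comm s t,
    sub_smul]

lemma qpow_ne_one {q : F} (hq : q ≠ 0) (hqru : ∀ n : ℕ, 0 < n → q ^ n ≠ 1)
    {k : ℤ} (hk : k ≠ 0) : q ^ k ≠ 1 := by
  rcases lt_trichotomy k 0 with hlt | heq | hgt
  · intro hone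
    have h1 : q ^ (-k) = 1 := by
      rw [zpow_neg, hone, inv_one]
    have hnat : q ^ (-k).toNat = 1 := by
      rw [← zpow_natCast, Int.toNat_of_nonneg (by omega)]; exact h1
    exact hqru (-k).toNat (by omega) hnat
  · exact absurd heq hk
  · intro hone
    have hnat : q ^ k.toNat = 1 := by
      rw [← zpow_natCast, Int.toNat_of_nonneg (by omega)]; exact hone
    exact hqru k.toNat (by omega) hnat

lemma qpow_sub_ne_zero {q : F} (hq : q ≠ 0) (hqru : ∀ n : ℕ, 0 < n → q ^ n ≠ 1)
    {a b : ℤ} (hab : a ≠ b) : q ^ a - q ^ b ≠ 0 := by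
  intro hzero
  have hab' : q ^ a = q ^ b := sub_eq_zero.mp hzero
  have : q ^ (a - b) = 1 := by
    rw [zpow_sub₀ hq, hab', div_self (zpow_ne_zero _ hq)]
  exact qpow_ne_one hq hqru (by omega) this

lemma gen_mem {q : F} (hq : q ≠ 0) (hqru : ∀ n : ℕ, 0 < n → q ^ n ≠ 1) {z1 z2 z3 : Aˣ}
    (h12 : (↑z1 * ↑z2 : A) = q • (↑z2 * ↑z1 : A))
    (h23 : (↑z2 * ↑z3 : A) = q • (↑z3 * ↑z2 : A))
    (h31 : (↑z3 * ↑z1 : A) = q • (↑z1 * ↑z3 : A))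
    {t s r : ℤ × ℤ × ℤ}
    (ht : qmono z1 z2 z3 t ∈ LqSub F z1 z2 z3)
    (hs : qmono z1 z2 z3 s ∈ LqSub F z1 z2 z3)
    (hne : qsig t s ≠ qsig s t) (hr : t + s = r) :
    qmono z1 z2 z3 r ∈ LqSub F z1 z2 z3 := by
  subst hr
  have hc : q ^ qsig t s - q ^ qsig s t ≠ 0 := qpow_sub_ne_zero hq hqru hne
  have hbr : ⁅qmono z1 z2 z3 t, qmono z1 z2 z3 s⁆ ∈ LqSub F z1 z2 z3 :=
    LieSubalgebra.lie_mem _ ht hs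
  rw [qmono_bracket hq h12 h23 h31] at hbr
  have := (LqSub F z1 z2 z3).smul_mem (q ^ qsig t s - q ^ qsig s t)⁻¹ hbr
  rwa [inv_smul_smul₀ hc] at this

lemma mem_z1 (z1 z2 z3 : Aˣ) : qmono z1 z2 z3 (0, 0, 1) ∈ LqSub F z1 z2 z3 := by
  have : qmono z1 z2 z3 (0, 0, 1) = ↑z1 := by simp [qmono]
  rw [this]; exact LieSubalgebra.subset_lieSpan (by simp)

lemma mem_z1' (z1 z2 z3 : Aˣ) : qmono z1 z2 z3 (0, 0, -1) ∈ LqSub F z1 z2 z3 := by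
  have : qmono z1 z2 z3 (0, 0, -1) = ↑z1⁻¹ := by simp [qmono]
  rw [this]; exact LieSubalgebra.subset_lieSpan (by simp)

lemma mem_z2 (z1 z2 z3 : Aˣ) : qmono z1 z2 z3 (0, 1, 0) ∈ LqSub F z1 z2 z3 := by
  have : qmono z1 z2 z3 (0, 1, 0) = ↑z2 := by simp [qmono]
  rw [this]; exact LieSubalgebra.subset_lieSpan (by simp)

lemma mem_z2' (z1 z2 z3 : Aˣ) : qmono z1 z2 z3 (0, -1, 0) ∈ LqSub F z1 z2 z3 := by
  have : qmono z1 z2 z3 (0, -1, 0) = ↑z2⁻¹ := by simp [qmono]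
  rw [this]; exact LieSubalgebra.subset_lieSpan (by simp)

lemma mem_z3 (z1 z2 z3 : Aˣ) : qmono z1 z2 z3 (1, 0, 0) ∈ LqSub F z1 z2 z3 := by
  have : qmono z1 z2 z3 (1, 0, 0) = ↑z3 := by simp [qmono]
  rw [this]; exact LieSubalgebra.subset_lieSpan (by simp)

lemma mem_z3' (z1 z2 z3 : Aˣ) : qmono z1 z2 z3 (-1, 0, 0) ∈ LqSub F z1 z2 z3 := by
  have : qmono z1 z2 z3 (-1, 0, 0) = ↑z3⁻¹ := by simp [qmono]
  rw [this]; exact LieSubalgebra.subset_lieSpan (by simp)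


lemma all_mem {q : F} (hq : q ≠ 0) (hqru : ∀ n : ℕ, 0 < n → q ^ n ≠ 1) {z1 z2 z3 : Aˣ}
    (h12 : (↑z1 * ↑z2 : A) = q • (↑z2 * ↑z1 : A))
    (h23 : (↑z2 * ↑z3 : A) = q • (↑z3 * ↑z2 : A))
    (h31 : (↑z3 * ↑z1 : A) = q • (↑z1 * ↑z3 : A)) :
    ∀ t : ℤ × ℤ × ℤ, ¬ (t.1 = t.2.1 ∧ t.2.1 = t.2.2) →
      qmono z1 z2 z3 t ∈ LqSub F z1 z2 z3 := by
  have G := fun {t s r} => gen_mem (F := F) (A := A) hq hqru h12 h23 h31 (t := t) (s := s) (r := r)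
  have L1 : ∀ h : ℤ, qmono z1 z2 z3 (h, 0, 1) ∈ LqSub F z1 z2 z3 := by
    intro h
    induction h using Int.induction_on with
    | zero => exact mem_z1 z1 z2 z3
    | succ k ih =>
        exact G (mem_z3 z1 z2 z3) ih (by simp [qsig])
          (by simp only [Prod.mk_add_mk, Prod.mk.injEq]; omega)
    | pred k ih =>
        exact G (mem_z3' z1 z2 z3) ih (by simp [qsig])
          (by simp only [Prod.mk_add_mk, Prod.mk.injEq]; omega)
  have L1' : ∀ h : ℤ, qmono z1 z2 z3 (h, 0, -1) ∈ LqSub F z1 z2 z3 := by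
    intro h
    induction h using Int.induction_on with
    | zero => exact mem_z1' z1 z2 z3
    | succ k ih =>
        exact G (mem_z3 z1 z2 z3) ih (by simp [qsig])
          (by simp only [Prod.mk_add_mk, Prod.mk.injEq]; omega)
    | pred k ih =>
        exact G (mem_z3' z1 z2 z3) ih (by simp [qsig])
          (by simp only [Prod.mk_add_mk, Prod.mk.injEq]; omega)
  have L2 : ∀ H : ℤ, H ≠ 0 → qmono z1 z2 z3 (H, 0, 0) ∈ LqSub F z1 z2 z3 := by
    intro H hH
    exact G (L1 1) (L1' (H - 1)) (by simp [qsig]; omega)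
      (by simp only [Prod.mk_add_mk, Prod.mk.injEq]; omega)
  have L3a : ∀ h : ℤ, h ≠ 0 → ∀ n : ℤ, qmono z1 z2 z3 (h, 0, n) ∈ LqSub F z1 z2 z3 := by
    intro h hh n
    induction n using Int.induction_on with
    | zero => exact L2 h hh
    | succ k ih =>
        exact G (mem_z1 z1 z2 z3) ih (by simp [qsig]; omega)
          (by simp only [Prod.mk_add_mk, Prod.mk.injEq]; omega)
    | pred k ih =>
        exact G (mem_z1' z1 z2 z3) ih (by simp [qsig]; omega)
          (by simp only [Prod.mk_add_mk, Prod.mk.injEq]; omega)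
  have L3 : ∀ h n : ℤ, ¬ (h = 0 ∧ n = 0) → qmono z1 z2 z3 (h, 0, n) ∈ LqSub F z1 z2 z3 := by
    intro h n hhn
    by_cases hh : h = 0
    · subst hh
      have hn : n ≠ 0 := by omega
      exact G (L1 1) (L3a (-1) (by norm_num) (n - 1)) (by simp [qsig]; omega)
        (by simp only [Prod.mk_add_mk, Prod.mk.injEq]; omega)
    · exact L3a h hh n
  have L4 : ∀ h n : ℤ, h ≠ n → ∀ m : ℤ, qmono z1 z2 z3 (h, m, n) ∈ LqSub F z1 z2 z3 := by
    intro h n hhn m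
    induction m using Int.induction_on with
    | zero => exact L3 h n (by omega)
    | succ k ih =>
        exact G (mem_z2 z1 z2 z3) ih (by simp [qsig]; omega)
          (by simp only [Prod.mk_add_mk, Prod.mk.injEq]; omega)
    | pred k ih =>
        exact G (mem_z2' z1 z2 z3) ih (by simp [qsig]; omega)
          (by simp only [Prod.mk_add_mk, Prod.mk.injEq]; omega)
  rintro ⟨h, m, n⟩ ht
  simp only at ht
  by_cases hn : h = n
  · subst hn
    have hm : m ≠ h := by tauto
    exact G (mem_z1' z1 z2 z3) (L4 h (h + 1) (by omega) m) (by simp [qsig]; omega)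
      (by simp only [Prod.mk_add_mk, Prod.mk.injEq]; omega)
  · exact L4 h n hn m


private lemma qsig_symm_of_diag {t s : ℤ × ℤ × ℤ}
    (hd : (t + s).1 = (t + s).2.1 ∧ (t + s).2.1 = (t + s).2.2) : qsig t s = qsig s t := by
  obtain ⟨h, m, n⟩ := t
  obtain ⟨h', m', n'⟩ := s
  simp only [Prod.mk_add_mk] at hd
  obtain ⟨e1, e2⟩ := hd
  simp only [qsig]
  linear_combination (m - n) * e1 + (m - h) * e2

lemma span_eq_Lq {q : F} (hq : q ≠ 0) (hqru : ∀ n : ℕ, 0 < n → q ^ n ≠ 1) {z1 z2 z3 : Aˣ}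
    (h12 : (↑z1 * ↑z2 : A) = q • (↑z2 * ↑z1 : A))
    (h23 : (↑z2 * ↑z3 : A) = q • (↑z3 * ↑z2 : A))
    (h31 : (↑z3 * ↑z1 : A) = q • (↑z1 * ↑z3 : A)) :
    (LqSub F z1 z2 z3).toSubmodule =
      Submodule.span F {x : A | ∃ h m n : ℤ, ¬ (h = m ∧ m = n) ∧
        x = (↑(z3 ^ h * z2 ^ m * z1 ^ n) : A)} := by
  set S : Set A := {x : A | ∃ h m n : ℤ, ¬ (h = m ∧ m = n) ∧
    x = (↑(z3 ^ h * z2 ^ m * z1 ^ n) : A)} with hS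
  have hmonoS : ∀ t : ℤ × ℤ × ℤ, ¬ (t.1 = t.2.1 ∧ t.2.1 = t.2.2) →
      qmono z1 z2 z3 t ∈ S := by
    rintro ⟨h, m, n⟩ ht
    exact ⟨h, m, n, by simpa using ht, rfl⟩
  have key0 : ∀ x ∈ S, ∀ y ∈ S, ⁅x, y⁆ ∈ Submodule.span F S := by
    rintro x ⟨h, m, n, hne, rfl⟩ y ⟨h', m', n', hne', rfl⟩
    have hx : (↑(z3 ^ h * z2 ^ m * z1 ^ n) : A) = qmono z1 z2 z3 (h, m, n) := rfl
    have hy : (↑(z3 ^ h' * z2 ^ m' * z1 ^ n') : A) = qmono z1 z2 z3 (h', m', n') := rfl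
    rw [hx, hy, qmono_bracket hq h12 h23 h31]
    by_cases hd : ((h, m, n) + (h', m', n') : ℤ × ℤ × ℤ).1 = ((h, m, n) + (h', m', n')).2.1 ∧
        ((h, m, n) + (h', m', n')).2.1 = ((h, m, n) + (h', m', n')).2.2
    · rw [qsig_symm_of_diag hd, sub_self, zero_smul]
      exact Submodule.zero_mem _
    · exact Submodule.smul_mem _ _ (Submodule.subset_span (hmonoS _ hd))
  have inner : ∀ x ∈ S, ∀ y ∈ Submodule.span F S, ⁅x, y⁆ ∈ Submodule.span F S := by
    intro x hxS y hy
    induction hy using Submodule.span_induction with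
    | mem y hyS => exact key0 x hxS y hyS
    | zero => simp
    | add a b ha hb iha ihb => rw [lie_add]; exact Submodule.add_mem _ iha ihb
    | smul c a ha iha => rw [lie_smul]; exact Submodule.smul_mem _ _ iha
  have hclosed : ∀ x ∈ Submodule.span F S, ∀ y ∈ Submodule.span F S,
      ⁅x, y⁆ ∈ Submodule.span F S := by
    intro x hx
    induction hx using Submodule.span_induction with
    | mem x hxS => exact inner x hxS
    | zero => intro y hy; simp
    | add a b ha hb iha ihb =>
        intro y hy; rw [add_lie]; exact Submodule.add_mem _ (iha y hy) (ihb y hy)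
    | smul c a ha iha =>
        intro y hy; rw [smul_lie]; exact Submodule.smul_mem _ _ (iha y hy)
  apply le_antisymm
  · let K : LieSubalgebra F A :=
      { Submodule.span F S with lie_mem' := fun {x y} hx hy => hclosed _ hx _ hy }
    have hle : LqSub F z1 z2 z3 ≤ K := by
      apply LieSubalgebra.lieSpan_le.mpr
      intro x hx
      simp only [Set.mem_insert_iff, Set.mem_singleton_iff] at hx
      have mem_of : ∀ t : ℤ × ℤ × ℤ, ¬ (t.1 = t.2.1 ∧ t.2.1 = t.2.2) →
          qmono z1 z2 z3 t ∈ K := fun t ht => Submodule.subset_span (hmonoS t ht)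
      have h1 : (↑z1 : A) ∈ K := by
        have : (↑z1 : A) = qmono z1 z2 z3 (0, 0, 1) := by simp [qmono]
        rw [this]; exact mem_of _ (by simp)
      have h1' : (↑z1⁻¹ : A) ∈ K := by
        have : (↑z1⁻¹ : A) = qmono z1 z2 z3 (0, 0, -1) := by simp [qmono]
        rw [this]; exact mem_of _ (by simp)
      have h2 : (↑z2 : A) ∈ K := by
        have : (↑z2 : A) = qmono z1 z2 z3 (0, 1, 0) := by simp [qmono]
        rw [this]; exact mem_of _ (by simp)
      have h2' : (↑z2⁻¹ : A) ∈ K := by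
        have : (↑z2⁻¹ : A) = qmono z1 z2 z3 (0, -1, 0) := by simp [qmono]
        rw [this]; exact mem_of _ (by simp)
      have h3 : (↑z3 : A) ∈ K := by
        have : (↑z3 : A) = qmono z1 z2 z3 (1, 0, 0) := by simp [qmono]
        rw [this]; exact mem_of _ (by simp)
      have h3' : (↑z3⁻¹ : A) ∈ K := by
        have : (↑z3⁻¹ : A) = qmono z1 z2 z3 (-1, 0, 0) := by simp [qmono]
        rw [this]; exact mem_of _ (by simp)
      rcases hx with h | h | h | h | h | h <;> subst h <;> assumption
    intro x hx
    exact hle hx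
  · rw [Submodule.span_le]
    rintro x ⟨h, m, n, hne, rfl⟩
    exact all_mem hq hqru h12 h23 h31 (h, m, n) (by simpa using hne)

end aux

/-- The monomials `z₃^h z₂^m z₁^n`, where `(h,m,n)` ranges over all
triples of integers for which it is not the case that `h = m = n`, form an `F`-basis
of `L_q`; equivalently, `L_q` equals the `F`-linear span of these monomials. -/
theorem basis_of_Lq
    {F : Type*} [Field F] {A : Type*} [Ring A] [Algebra F A]
    (q : F) (hq : q ≠ 0) (hqru : ∀ n : ℕ, 0 < n → q ^ n ≠ 1)
    (z1 z2 z3 : Aˣ)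
    (h12 : (↑z1 * ↑z2 : A) = q • (↑z2 * ↑z1 : A))
    (h23 : (↑z2 * ↑z3 : A) = q • (↑z3 * ↑z2 : A))
    (h31 : (↑z3 * ↑z1 : A) = q • (↑z1 * ↑z3 : A))
    (b : Module.Basis (ℤ × ℤ × ℤ) F A)
    (hb : ∀ t : ℤ × ℤ × ℤ, b t = (↑(z3 ^ t.1 * z2 ^ t.2.1 * z1 ^ t.2.2) : A)) :
    (∃ c : Module.Basis {t : ℤ × ℤ × ℤ // ¬ (t.1 = t.2.1 ∧ t.2.1 = t.2.2)} F
        (LqSub F z1 z2 z3).toSubmodule,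
      ∀ t, (c t : A) = (↑(z3 ^ t.1.1 * z2 ^ t.1.2.1 * z1 ^ t.1.2.2) : A)) ∧
    (LqSub F z1 z2 z3).toSubmodule =
      Submodule.span F {x : A | ∃ h m n : ℤ, ¬ (h = m ∧ m = n) ∧
        x = (↑(z3 ^ h * z2 ^ m * z1 ^ n) : A)} := by
  have hspan := span_eq_Lq hq hqru h12 h23 h31
  refine ⟨?_, hspan⟩
  let v : {t : ℤ × ℤ × ℤ // ¬ (t.1 = t.2.1 ∧ t.2.1 = t.2.2)} → A := fun t => b t.1
  have li : LinearIndependent F v := b.linearIndependent.comp _ Subtype.val_injective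
  have hrange : Set.range v = {x : A | ∃ h m n : ℤ, ¬ (h = m ∧ m = n) ∧
      x = (↑(z3 ^ h * z2 ^ m * z1 ^ n) : A)} := by
    ext x
    constructor
    · rintro ⟨⟨⟨h, m, n⟩, ht⟩, rfl⟩
      exact ⟨h, m, n, by simpa using ht, by simp [v, hb]⟩
    · rintro ⟨h, m, n, hne, rfl⟩
      exact ⟨⟨(h, m, n), by simpa using hne⟩, by simp [v, hb]⟩
  have heq : Submodule.span F (Set.range v) = (LqSub F z1 z2 z3).toSubmodule := by
    rw [hrange, ← hspan]
  refine ⟨(Module.Basis.span li).map (LinearEquiv.ofEq _ _ heq), fun t => ?_⟩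
  simp only [Module.Basis.map_apply, LinearEquiv.coe_ofEq_apply, Module.Basis.span_apply, v, hb]
end

section
/- The vector space A_q is the internal direct sum of L_q and the F-linear span of the set {z_3^h z_2^h z_1^h : h ∈ ℤ}; that is, these two subspaces intersect trivially and their sum is all of A_q. -/
attribute [local instance 100] LieRing.ofAssociativeRing

section AuxGroup
variable {G : Type*} [Group G]

lemma aux_swap_w {x y C : G} (h : x * y = C * (y * x)) (w : G) :
    x * (y * w) = C * (y * (x * w)) := by
  rw [← mul_assoc, h, mul_assoc, mul_assoc]

lemma aux_pull {Qk : G} (hc : ∀ w : G, Commute Qk w) (x w : G) :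
    x * (Qk * w) = Qk * (x * w) := by
  rw [← mul_assoc, ← (hc x).eq, mul_assoc]

lemma aux_swap_pow (u v Q : G) (hQ : ∀ w, Commute Q w) (h : u * v = Q * (v * u)) :
    ∀ n : ℕ, u ^ n * v = Q ^ n * (v * u ^ n) := by
  intro n
  induction n with
  | zero => simp
  | succ n ih =>
    calc u ^ (n + 1) * v = u ^ n * (u * v) := by rw [pow_succ, mul_assoc]
      _ = u ^ n * (Q * (v * u)) := by rw [h]
      _ = Q * (u ^ n * v * u) := by
          rw [← mul_assoc, ← (hQ (u ^ n)).eq, mul_assoc, mul_assoc]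
      _ = Q * (Q ^ n * (v * u ^ n) * u) := by rw [ih]
      _ = Q ^ (n + 1) * (v * u ^ (n + 1)) := by
          rw [pow_succ, pow_succ]
          group

lemma aux_swap_zpow (u v Q : G) (hQ : ∀ w, Commute Q w) (h : u * v = Q * (v * u)) :
    ∀ n : ℤ, u ^ n * v = Q ^ n * (v * u ^ n) := by
  have h' : v * u = Q⁻¹ * (u * v) := by rw [h, inv_mul_cancel_left]
  have hinv : u⁻¹ * v = Q⁻¹ * (v * u⁻¹) := by
    have e1 : u⁻¹ * (v * u) * u⁻¹ = u⁻¹ * v := by group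
    rw [← e1, h', ← mul_assoc, ← mul_assoc, ← ((hQ u⁻¹).inv_left).eq, mul_assoc, mul_assoc,
      mul_assoc]
    congr 1
    group
  intro n
  obtain ⟨m, rfl | rfl⟩ := n.eq_nat_or_neg
  · simpa [zpow_natCast] using aux_swap_pow u v Q hQ h m
  · have := aux_swap_pow u⁻¹ v Q⁻¹ (fun w => (hQ w).inv_left) hinv m
    simpa [zpow_neg, zpow_natCast, inv_pow] using this

lemma aux_swap_zpow2 (u v Q : G) (hQ : ∀ w, Commute Q w) (h : u * v = Q * (v * u))
    (n m : ℤ) : u ^ n * v ^ m = Q ^ (n * m) * (v ^ m * u ^ n) := by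
  have h1 : v * u ^ n = (Q ^ n)⁻¹ * (u ^ n * v) := by
    rw [aux_swap_zpow u v Q hQ h n, inv_mul_cancel_left]
  have h2 := aux_swap_zpow v (u ^ n) (Q ^ n)⁻¹
    (fun w => ((hQ w).zpow_left n).inv_left) h1 m
  rw [h2, ← mul_assoc, inv_zpow, ← zpow_neg, ← zpow_mul, ← zpow_add,
    show n * m + n * -m = 0 by ring, zpow_zero, one_mul]

lemma aux_N_mul (z1 z2 z3 Q : G) (hQ : ∀ w, Commute Q w)
    (r12 : z1 * z2 = Q * (z2 * z1)) (r23 : z2 * z3 = Q * (z3 * z2))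
    (r31 : z3 * z1 = Q * (z1 * z3)) (a b c d e f : ℤ) :
    (z3 ^ a * z2 ^ b * z1 ^ c) * (z3 ^ d * z2 ^ e * z1 ^ f)
      = Q ^ (b * d + c * e - c * d) * (z3 ^ (a + d) * z2 ^ (b + e) * z1 ^ (c + f)) := by
  have h31' : z1 * z3 = Q⁻¹ * (z3 * z1) := by rw [r31, inv_mul_cancel_left]
  have e13 : z1 ^ c * z3 ^ d = Q ^ (-(c * d)) * (z3 ^ d * z1 ^ c) := by
    have := aux_swap_zpow2 z1 z3 Q⁻¹ (fun w => (hQ w).inv_left) h31' c d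
    rwa [inv_zpow, ← zpow_neg] at this
  have e12 : z1 ^ c * z2 ^ e = Q ^ (c * e) * (z2 ^ e * z1 ^ c) :=
    aux_swap_zpow2 z1 z2 Q hQ r12 c e
  have e23 : z2 ^ b * z3 ^ d = Q ^ (b * d) * (z3 ^ d * z2 ^ b) :=
    aux_swap_zpow2 z2 z3 Q hQ r23 b d
  have hc : ∀ (k : ℤ) (w : G), Commute (Q ^ k) w := fun k w => (hQ w).zpow_left k
  simp only [mul_assoc]
  rw [aux_swap_w e13, aux_swap_w e12, aux_pull (hc (c*e)) (z3 ^ d),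
    ← mul_assoc (Q ^ (-(c*d))) (Q ^ (c*e)), ← zpow_add,
    aux_pull (hc (-(c*d) + c*e)) (z2 ^ b), aux_pull (hc (-(c*d) + c*e)) (z3 ^ a),
    aux_swap_w e23, aux_pull (hc (b*d)) (z3 ^ a),
    ← mul_assoc (Q ^ (-(c*d) + c*e)) (Q ^ (b*d)), ← zpow_add,
    show -(c * d) + c * e + b * d = b * d + c * e - c * d by ring,
    ← mul_assoc (z3 ^ a), ← zpow_add, ← mul_assoc (z2 ^ b), ← zpow_add, ← zpow_add]

end AuxGroup

section AuxAlg
variable {F : Type*} [Field F] {A : Type*} [Ring A] [Algebra F A]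

lemma aux_zpow_inj {q : F} (hq : q ≠ 0) (hqru : ∀ n : ℕ, 0 < n → q ^ n ≠ 1)
    {i j : ℤ} (h : q ^ i = q ^ j) : i = j := by
  have h1 : q ^ (i - j) = 1 := by
    rw [zpow_sub₀ hq, h, div_self (zpow_ne_zero _ hq)]
  by_contra hne
  rcases lt_trichotomy (i - j) 0 with hlt | heq | hgt
  · have h2 : q ^ (j - i) = 1 := by
      rw [zpow_sub₀ hq, ← h, div_self (zpow_ne_zero _ hq)]
    have h3 : q ^ ((j - i).toNat) = 1 := by
      rw [← zpow_natCast, Int.toNat_of_nonneg (by omega)]; exact h2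
    exact hqru _ (by omega) h3
  · omega
  · have h3 : q ^ ((i - j).toNat) = 1 := by
      rw [← zpow_natCast, Int.toNat_of_nonneg (by omega)]; exact h1
    exact hqru _ (by omega) h3

lemma aux_lie_Mo (q : F) (z1 z2 z3 Q : Aˣ) (hQ : ∀ w, Commute Q w)
    (r12 : z1 * z2 = Q * (z2 * z1)) (r23 : z2 * z3 = Q * (z3 * z2))
    (r31 : z3 * z1 = Q * (z1 * z3))
    (hQA : ∀ (k : ℤ) (x : A), ((Q ^ k : Aˣ) : A) * x = q ^ k • x)
    (a b c d e f : ℤ) :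
    ⁅((z3 ^ a * z2 ^ b * z1 ^ c : Aˣ) : A), ((z3 ^ d * z2 ^ e * z1 ^ f : Aˣ) : A)⁆
      = (q ^ (b * d + c * e - c * d) - q ^ (e * a + f * b - f * a)) •
          ((z3 ^ (a + d) * z2 ^ (b + e) * z1 ^ (c + f) : Aˣ) : A) := by
  rw [Ring.lie_def]
  have p1 : ((z3 ^ a * z2 ^ b * z1 ^ c : Aˣ) : A) * ((z3 ^ d * z2 ^ e * z1 ^ f : Aˣ) : A)
      = q ^ (b * d + c * e - c * d) • ((z3 ^ (a + d) * z2 ^ (b + e) * z1 ^ (c + f) : Aˣ) : A) := by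
    rw [← Units.val_mul, aux_N_mul z1 z2 z3 Q hQ r12 r23 r31, Units.val_mul, hQA]
  have p2 : ((z3 ^ d * z2 ^ e * z1 ^ f : Aˣ) : A) * ((z3 ^ a * z2 ^ b * z1 ^ c : Aˣ) : A)
      = q ^ (e * a + f * b - f * a) • ((z3 ^ (a + d) * z2 ^ (b + e) * z1 ^ (c + f) : Aˣ) : A) := by
    rw [← Units.val_mul, aux_N_mul z1 z2 z3 Q hQ r12 r23 r31, Units.val_mul, hQA,
      add_comm d a, add_comm e b, add_comm f c]
  rw [p1, p2, ← sub_smul]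

lemma aux_bump (q : F) (hq : q ≠ 0) (hqru : ∀ n : ℕ, 0 < n → q ^ n ≠ 1)
    (z1 z2 z3 Q : Aˣ) (hQ : ∀ w, Commute Q w)
    (r12 : z1 * z2 = Q * (z2 * z1)) (r23 : z2 * z3 = Q * (z3 * z2))
    (r31 : z3 * z1 = Q * (z1 * z3))
    (hQA : ∀ (k : ℤ) (x : A), ((Q ^ k : Aˣ) : A) * x = q ^ k • x)
    (L : LieSubalgebra F A) (a b c d e f : ℤ)
    (hx : ((z3 ^ a * z2 ^ b * z1 ^ c : Aˣ) : A) ∈ L)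
    (hg : ((z3 ^ d * z2 ^ e * z1 ^ f : Aˣ) : A) ∈ L)
    (hs : b * d + c * e - c * d ≠ e * a + f * b - f * a) :
    ((z3 ^ (a + d) * z2 ^ (b + e) * z1 ^ (c + f) : Aˣ) : A) ∈ L := by
  set s : F := q ^ (b * d + c * e - c * d) - q ^ (e * a + f * b - f * a) with hs_def
  have hs0 : s ≠ 0 := sub_ne_zero.mpr fun h => hs (aux_zpow_inj hq hqru h)
  have hlie := L.lie_mem hx hg
  rw [aux_lie_Mo q z1 z2 z3 Q hQ r12 r23 r31 hQA] at hlie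
  have := L.smul_mem s⁻¹ hlie
  rwa [inv_smul_smul₀ hs0] at this

lemma aux_ladder (z1 z2 z3 : Aˣ) (L : LieSubalgebra F A)
    (bump : ∀ a b c d e f : ℤ, ((z3 ^ a * z2 ^ b * z1 ^ c : Aˣ) : A) ∈ L →
      ((z3 ^ d * z2 ^ e * z1 ^ f : Aˣ) : A) ∈ L →
      b * d + c * e - c * d ≠ e * a + f * b - f * a →
      ((z3 ^ (a + d) * z2 ^ (b + e) * z1 ^ (c + f) : Aˣ) : A) ∈ L)
    (g1 : ((z3 ^ (0:ℤ) * z2 ^ (0:ℤ) * z1 ^ (1:ℤ) : Aˣ) : A) ∈ L)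
    (g1' : ((z3 ^ (0:ℤ) * z2 ^ (0:ℤ) * z1 ^ (-1:ℤ) : Aˣ) : A) ∈ L)
    (g2 : ((z3 ^ (0:ℤ) * z2 ^ (1:ℤ) * z1 ^ (0:ℤ) : Aˣ) : A) ∈ L)
    (g2' : ((z3 ^ (0:ℤ) * z2 ^ (-1:ℤ) * z1 ^ (0:ℤ) : Aˣ) : A) ∈ L)
    (g3 : ((z3 ^ (1:ℤ) * z2 ^ (0:ℤ) * z1 ^ (0:ℤ) : Aˣ) : A) ∈ L)
    (g3' : ((z3 ^ (-1:ℤ) * z2 ^ (0:ℤ) * z1 ^ (0:ℤ) : Aˣ) : A) ∈ L) :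
    ∀ a b c : ℤ, ¬(a = b ∧ b = c) → ((z3 ^ a * z2 ^ b * z1 ^ c : Aˣ) : A) ∈ L := by
  have stepA : ∀ c : ℤ, ((z3 ^ (0:ℤ) * z2 ^ (1:ℤ) * z1 ^ c : Aˣ) : A) ∈ L := by
    intro c
    induction c using Int.induction_on with
    | zero => exact g2
    | succ n ih => simpa using bump 0 1 n 0 0 1 ih g1 (by omega)
    | pred n ih =>
      have := bump 0 1 (-n) 0 0 (-1) ih g1' (by omega)
      simpa [show (-(n:ℤ)) + -1 = -n - 1 by ring] using this
  have stepB : ∀ c : ℤ, c ≠ 1 → ∀ a : ℤ, ((z3 ^ a * z2 ^ (1:ℤ) * z1 ^ c : Aˣ) : A) ∈ L := by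
    intro c hc a
    induction a using Int.induction_on with
    | zero => exact stepA c
    | succ n ih => simpa using bump n 1 c 1 0 0 ih g3 (by omega)
    | pred n ih =>
      have := bump (-n) 1 c (-1) 0 0 ih g3' (by omega)
      simpa [show (-(n:ℤ)) + -1 = -n - 1 by ring] using this
  have stepC : ∀ a c : ℤ, a ≠ c → ((z3 ^ a * z2 ^ (1:ℤ) * z1 ^ c : Aˣ) : A) ∈ L := by
    intro a c hac
    by_cases hc : c = 1
    · subst hc
      have h0 := stepB 0 (by omega) a
      simpa using bump a 1 0 0 0 1 h0 g1 (by omega)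
    · exact stepB c hc a
  have stepD : ∀ a c : ℤ, a ≠ c → ∀ k : ℤ,
      ((z3 ^ a * z2 ^ (1 + k) * z1 ^ c : Aˣ) : A) ∈ L := by
    intro a c hac k
    induction k using Int.induction_on with
    | zero => simpa using stepC a c hac
    | succ n ih =>
      have := bump a (1 + n) c 0 1 0 ih g2 (by omega)
      simpa [show (1:ℤ) + n + 1 = 1 + (n + 1) by ring] using this
    | pred n ih =>
      have := bump a (1 + -n) c 0 (-1) 0 ih g2' (by omega)
      simpa [show (1:ℤ) + -n + -1 = 1 + (-n - 1) by ring] using this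
  have stepD' : ∀ a b c : ℤ, a ≠ c → ((z3 ^ a * z2 ^ b * z1 ^ c : Aˣ) : A) ∈ L := by
    intro a b c hac
    have := stepD a c hac (b - 1)
    simpa [show (1:ℤ) + (b - 1) = b by ring] using this
  intro a b c h
  by_cases hac : a = c
  · subst hac
    have hab : a ≠ b := fun hab => h ⟨hab, hab.symm⟩
    have := stepD' a b (a - 1) (by omega)
    have h2 := bump a b (a - 1) 0 0 1 this g1 (by omega)
    simpa [show a - 1 + 1 = a by ring] using h2
  · exact stepD' a b c hac

end AuxAlg

/-- `A_q` is the internal direct sum of `L_q` and the `F`-linear span of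
`{z₃^h z₂^h z₁^h : h ∈ ℤ}`: the two subspaces intersect trivially and their sum is all
of `A_q`. -/
theorem Aq_direct_sum_decomposition
    {F : Type*} [Field F] {A : Type*} [Ring A] [Algebra F A]
    (q : F) (hq : q ≠ 0) (hqru : ∀ n : ℕ, 0 < n → q ^ n ≠ 1)
    (z1 z2 z3 : Aˣ)
    (h12 : (↑z1 * ↑z2 : A) = q • (↑z2 * ↑z1 : A))
    (h23 : (↑z2 * ↑z3 : A) = q • (↑z3 * ↑z2 : A))
    (h31 : (↑z3 * ↑z1 : A) = q • (↑z1 * ↑z3 : A))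
    (b : Module.Basis (ℤ × ℤ × ℤ) F A)
    (hb : ∀ t : ℤ × ℤ × ℤ, b t = (↑(z3 ^ t.1 * z2 ^ t.2.1 * z1 ^ t.2.2) : A)) :
    (LqSub F z1 z2 z3).toSubmodule ⊓
        Submodule.span F {x : A | ∃ h : ℤ, x = (↑(z3 ^ h * z2 ^ h * z1 ^ h) : A)} = ⊥ ∧
    (LqSub F z1 z2 z3).toSubmodule ⊔
        Submodule.span F {x : A | ∃ h : ℤ, x = (↑(z3 ^ h * z2 ^ h * z1 ^ h) : A)} = ⊤ := by
  -- the central unit Q realizing multiplication by q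
  set Q : Aˣ := Units.map (algebraMap F A).toMonoidHom (Units.mk0 q hq) with hQdef
  have hQcoe : (Q : A) = algebraMap F A q := rfl
  have hQ : ∀ w : Aˣ, Commute Q w := by
    intro w
    apply Units.ext
    show ((Q * w : Aˣ) : A) = ((w * Q : Aˣ) : A)
    rw [Units.val_mul, Units.val_mul, hQcoe]
    exact Algebra.commutes q (w : A)
  have hQA : ∀ (k : ℤ) (x : A), ((Q ^ k : Aˣ) : A) * x = q ^ k • x := by
    intro k x
    have h1 : ((Q ^ k : Aˣ) : A) = algebraMap F A (q ^ k) := by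
      rw [hQdef, ← map_zpow (Units.map (algebraMap F A).toMonoidHom) (Units.mk0 q hq) k,
        Units.coe_map, Units.val_zpow_eq_zpow_val, Units.val_mk0]
      rfl
    rw [h1, ← Algebra.smul_def]
  -- the relations at the level of units
  have r12 : z1 * z2 = Q * (z2 * z1) := by
    apply Units.ext
    rw [Units.val_mul, Units.val_mul, Units.val_mul, hQcoe, ← Algebra.smul_def]
    exact h12
  have r23 : z2 * z3 = Q * (z3 * z2) := by
    apply Units.ext
    rw [Units.val_mul, Units.val_mul, Units.val_mul, hQcoe, ← Algebra.smul_def]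
    exact h23
  have r31 : z3 * z1 = Q * (z1 * z3) := by
    apply Units.ext
    rw [Units.val_mul, Units.val_mul, Units.val_mul, hQcoe, ← Algebra.smul_def]
    exact h31
  set L : LieSubalgebra F A := LqSub F z1 z2 z3 with hLdef
  -- generators belong to L
  have memgen : ∀ x : A, x ∈ ({(↑z1 : A), (↑z1⁻¹ : A), (↑z2 : A), (↑z2⁻¹ : A),
      (↑z3 : A), (↑z3⁻¹ : A)} : Set A) → x ∈ L := fun x hx =>
    LieSubalgebra.subset_lieSpan hx
  have g1 : ((z3 ^ (0:ℤ) * z2 ^ (0:ℤ) * z1 ^ (1:ℤ) : Aˣ) : A) ∈ L := by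
    have h : ((z3 ^ (0:ℤ) * z2 ^ (0:ℤ) * z1 ^ (1:ℤ) : Aˣ) : A) = ↑z1 := by simp
    rw [h]; exact memgen _ (by simp)
  have g1' : ((z3 ^ (0:ℤ) * z2 ^ (0:ℤ) * z1 ^ (-1:ℤ) : Aˣ) : A) ∈ L := by
    have h : ((z3 ^ (0:ℤ) * z2 ^ (0:ℤ) * z1 ^ (-1:ℤ) : Aˣ) : A) = ↑z1⁻¹ := by simp
    rw [h]; exact memgen _ (by simp)
  have g2 : ((z3 ^ (0:ℤ) * z2 ^ (1:ℤ) * z1 ^ (0:ℤ) : Aˣ) : A) ∈ L := by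
    have h : ((z3 ^ (0:ℤ) * z2 ^ (1:ℤ) * z1 ^ (0:ℤ) : Aˣ) : A) = ↑z2 := by simp
    rw [h]; exact memgen _ (by simp)
  have g2' : ((z3 ^ (0:ℤ) * z2 ^ (-1:ℤ) * z1 ^ (0:ℤ) : Aˣ) : A) ∈ L := by
    have h : ((z3 ^ (0:ℤ) * z2 ^ (-1:ℤ) * z1 ^ (0:ℤ) : Aˣ) : A) = ↑z2⁻¹ := by simp
    rw [h]; exact memgen _ (by simp)
  have g3 : ((z3 ^ (1:ℤ) * z2 ^ (0:ℤ) * z1 ^ (0:ℤ) : Aˣ) : A) ∈ L := by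
    have h : ((z3 ^ (1:ℤ) * z2 ^ (0:ℤ) * z1 ^ (0:ℤ) : Aˣ) : A) = ↑z3 := by simp
    rw [h]; exact memgen _ (by simp)
  have g3' : ((z3 ^ (-1:ℤ) * z2 ^ (0:ℤ) * z1 ^ (0:ℤ) : Aˣ) : A) ∈ L := by
    have h : ((z3 ^ (-1:ℤ) * z2 ^ (0:ℤ) * z1 ^ (0:ℤ) : Aˣ) : A) = ↑z3⁻¹ := by simp
    rw [h]; exact memgen _ (by simp)
  have bump := fun a b c d e f hx hg hs =>
    aux_bump q hq hqru z1 z2 z3 Q hQ r12 r23 r31 hQA L a b c d e f hx hg hs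
  have offdiag : ∀ a b c : ℤ, ¬(a = b ∧ b = c) →
      ((z3 ^ a * z2 ^ b * z1 ^ c : Aˣ) : A) ∈ L :=
    aux_ladder z1 z2 z3 L bump g1 g1' g2 g2' g3 g3'
  -- the span of off-diagonal basis monomials
  set Dset : Set (ℤ × ℤ × ℤ) := {t | t.1 = t.2.1 ∧ t.2.1 = t.2.2} with hDsetdef
  set S : Submodule F A := Submodule.span F (⇑b '' Dsetᶜ) with hSdef
  -- all brackets land in S
  have key0 : ∀ t u : ℤ × ℤ × ℤ, ⁅b t, b u⁆ ∈ S := by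
    intro t u
    rw [hb t, hb u, aux_lie_Mo q z1 z2 z3 Q hQ r12 r23 r31 hQA]
    by_cases hdg : t.1 + u.1 = t.2.1 + u.2.1 ∧ t.2.1 + u.2.1 = t.2.2 + u.2.2
    · have hzero : q ^ (t.2.1 * u.1 + t.2.2 * u.2.1 - t.2.2 * u.1)
          - q ^ (u.2.1 * t.1 + u.2.2 * t.2.1 - u.2.2 * t.1) = 0 := by
        have hexp : t.2.1 * u.1 + t.2.2 * u.2.1 - t.2.2 * u.1
            = u.2.1 * t.1 + u.2.2 * t.2.1 - u.2.2 * t.1 := by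
          obtain ⟨ha, hb'⟩ := hdg
          linear_combination (t.2.1 - t.2.2) * ha + (t.2.1 - t.1) * hb'
        rw [hexp, sub_self]
      rw [hzero, zero_smul]
      exact S.zero_mem
    · apply Submodule.smul_mem
      apply Submodule.subset_span
      exact ⟨(t.1 + u.1, t.2.1 + u.2.1, t.2.2 + u.2.2), hdg, (hb _)⟩
  have key1 : ∀ (t : ℤ × ℤ × ℤ) (y : A), ⁅b t, y⁆ ∈ S := by
    intro t y
    have hy : y ∈ Submodule.span F (Set.range ⇑b) := by
      rw [b.span_eq]; exact Submodule.mem_top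
    induction hy using Submodule.span_induction with
    | mem x hx => obtain ⟨u, rfl⟩ := hx; exact key0 t u
    | zero => rw [lie_zero]; exact S.zero_mem
    | add x y hx hy ihx ihy => rw [lie_add]; exact S.add_mem ihx ihy
    | smul r x hx ih => rw [lie_smul]; exact S.smul_mem r ih
  have key2 : ∀ x y : A, ⁅x, y⁆ ∈ S := by
    intro x y
    have hx : x ∈ Submodule.span F (Set.range ⇑b) := by
      rw [b.span_eq]; exact Submodule.mem_top
    induction hx using Submodule.span_induction with
    | mem x hx => obtain ⟨t, rfl⟩ := hx; exact key1 t y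
    | zero => rw [zero_lie]; exact S.zero_mem
    | add x x' hx hx' ihx ihx' => rw [add_lie]; exact S.add_mem ihx ihx'
    | smul r x hx ih => rw [smul_lie]; exact S.smul_mem r ih
  -- off-diagonal span as a Lie subalgebra
  set K : LieSubalgebra F A :=
    { toSubmodule := S, lie_mem' := fun {x y} _ _ => key2 x y } with hKdef
  have hLK : L ≤ K := by
    rw [hLdef]
    apply LieSubalgebra.lieSpan_le.mpr
    intro x hx
    simp only [Set.mem_insert_iff, Set.mem_singleton_iff] at hx
    have hmem : ∀ (t : ℤ × ℤ × ℤ), t ∈ Dsetᶜ → (b t : A) ∈ K := by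
      intro t ht
      exact Submodule.subset_span ⟨t, ht, rfl⟩
    rcases hx with rfl | rfl | rfl | rfl | rfl | rfl
    · have := hmem (0, 0, 1) (by simp [hDsetdef])
      rwa [hb, show ((z3 ^ (0:ℤ) * z2 ^ (0:ℤ) * z1 ^ (1:ℤ) : Aˣ) : A) = ↑z1 by simp] at this
    · have := hmem (0, 0, -1) (by simp [hDsetdef])
      rwa [hb, show ((z3 ^ (0:ℤ) * z2 ^ (0:ℤ) * z1 ^ (-1:ℤ) : Aˣ) : A) = ↑z1⁻¹ by simp] at this
    · have := hmem (0, 1, 0) (by simp [hDsetdef])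
      rwa [hb, show ((z3 ^ (0:ℤ) * z2 ^ (1:ℤ) * z1 ^ (0:ℤ) : Aˣ) : A) = ↑z2 by simp] at this
    · have := hmem (0, -1, 0) (by simp [hDsetdef])
      rwa [hb, show ((z3 ^ (0:ℤ) * z2 ^ (-1:ℤ) * z1 ^ (0:ℤ) : Aˣ) : A) = ↑z2⁻¹ by simp] at this
    · have := hmem (1, 0, 0) (by simp [hDsetdef])
      rwa [hb, show ((z3 ^ (1:ℤ) * z2 ^ (0:ℤ) * z1 ^ (0:ℤ) : Aˣ) : A) = ↑z3 by simp] at this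
    · have := hmem (-1, 0, 0) (by simp [hDsetdef])
      rwa [hb, show ((z3 ^ (-1:ℤ) * z2 ^ (0:ℤ) * z1 ^ (0:ℤ) : Aˣ) : A) = ↑z3⁻¹ by simp] at this
  -- the diagonal span
  have hDeq : {x : A | ∃ h : ℤ, x = (↑(z3 ^ h * z2 ^ h * z1 ^ h) : A)} = ⇑b '' Dset := by
    ext x
    constructor
    · rintro ⟨h, rfl⟩
      exact ⟨(h, h, h), ⟨rfl, rfl⟩, hb _⟩
    · rintro ⟨⟨t1, t2, t3⟩, ⟨ht1, ht2⟩, rfl⟩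
      simp only at ht1 ht2
      refine ⟨t1, ?_⟩
      rw [hb]
      simp only
      rw [← ht1, ← ht2, ← ht1]
  have hdisj : Disjoint S (Submodule.span F (⇑b '' Dset)) :=
    b.linearIndependent.disjoint_span_image disjoint_compl_left
  constructor
  · rw [eq_bot_iff]
    intro x hx
    obtain ⟨hx1, hx2⟩ := Submodule.mem_inf.mp hx
    exact hdisj.le_bot (Submodule.mem_inf.mpr ⟨hLK hx1, by rwa [hDeq] at hx2⟩)
  · rw [eq_top_iff, ← b.span_eq]
    apply Submodule.span_le.mpr
    rintro x ⟨t, rfl⟩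
    by_cases hdg : t.1 = t.2.1 ∧ t.2.1 = t.2.2
    · apply Submodule.mem_sup_right
      apply Submodule.subset_span
      refine ⟨t.1, ?_⟩
      rw [hb]
      obtain ⟨ht1, ht2⟩ := hdg
      rw [← ht1, ← ht2, ← ht1]
    · apply Submodule.mem_sup_left
      rw [hb]
      exact offdiag t.1 t.2.1 t.2.2 hdg
end
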